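/- arXiv:1608.05444 — 11 statements merged into one kernel-verified Lean document; each statement's English description precedes it below -/
import Mathlib

section
/- Let H = (D, A, →, ≤, ∼) be a navigation history and d ∈ D. Define traversal of the history to d as replacing A by A' = { e ∈ A | ¬(d ∼ e) } ∪ {d}. Then H' = (D, A', →, ≤, ∼) is again a navigation history, i.e. it satisfies all the navigation history axioms. -/
structure NavData (α : Type) where
  D : Set α
  A : Set α
  child : α → α → Prop
  le : α → α → Prop
  sim : α → α → Prop

namespace NavData

variable {α : Type}

/-- All the navigation history axioms: finiteness, A ⊆ D, the child relation is a
forest on D, ≤ is a total order on D, ∼ is an equivalence on D, every document has a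
unique active ∼-representative, same-session documents share parents, parents precede
children chronologically. -/
def IsNavHist (H : NavData α) : Prop :=
  H.D.Finite ∧
  H.A ⊆ H.D ∧
  (∀ d e, H.child d e → d ∈ H.D ∧ e ∈ H.D) ∧
  (∀ d, ¬ Relation.TransGen H.child d d) ∧
  (∀ p q e, H.child p e → H.child q e → p = q) ∧
  (∀ d ∈ H.D, H.le d d) ∧
  (∀ d e f, H.le d e → H.le e f → H.le d f) ∧
  (∀ d e, H.le d e → H.le e d → d = e) ∧
  (∀ d e, H.le d e → d ∈ H.D ∧ e ∈ H.D) ∧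
  (∀ d ∈ H.D, ∀ e ∈ H.D, H.le d e ∨ H.le e d) ∧
  (∀ d ∈ H.D, H.sim d d) ∧
  (∀ d e, H.sim d e → H.sim e d) ∧
  (∀ d e f, H.sim d e → H.sim e f → H.sim d f) ∧
  (∀ d e, H.sim d e → d ∈ H.D ∧ e ∈ H.D) ∧
  (∀ d ∈ H.D, ∃! d', d' ∈ H.A ∧ H.sim d d') ∧
  (∀ d e e', H.child d e → H.sim e e' → H.child d e') ∧
  (∀ d e, H.child d e → H.le d e)

/-- Strict chronological order `d < e`. -/
def lt (H : NavData α) (d e : α) : Prop := H.le d e ∧ d ≠ e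

/-- `d ≲ e` : same session and strictly earlier. -/
def before (H : NavData α) (d e : α) : Prop := H.sim d e ∧ H.lt d e

/-- The joint session future: documents strictly later than some active same-session doc. -/
def JSF (H : NavData α) : Set α := { e | ∃ d ∈ H.A, H.before d e }

/-- Traversing the history to `d`: replace A by { e ∈ A | ¬(d ∼ e) } ∪ {d}. -/
def traverseTo (H : NavData α) (d : α) : NavData α :=
  { H with A := { e | (e ∈ H.A ∧ ¬ H.sim d e) ∨ e = d } }

def WellFormed (H : NavData α) : Prop :=
  ∀ a b c d, H.before a b → H.before c d → a ∈ H.A → d ∈ H.A → H.le d b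

/-- The forward target: the ≤-least element of the joint session future. -/
def IsForwardTarget (H : NavData α) (f : α) : Prop :=
  f ∈ H.JSF ∧ ∀ e ∈ H.JSF, H.le f e

def CanGoBack (H : NavData α) (d : α) : Prop := ∃ c, H.before c d

/-- The back target: the ≤-largest active document that can go back. -/
def IsBackTarget (H : NavData α) (b : α) : Prop :=
  b ∈ H.A ∧ H.CanGoBack b ∧ ∀ d ∈ H.A, H.CanGoBack d → H.le d b

/-- `d` is the ≤-largest document with `d ≲ d'`. -/
def IsBackStepTarget (H : NavData α) (d' d : α) : Prop :=
  H.before d d' ∧ ∀ e, H.before e d' → H.le e d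

/-- Traversing the history from `d'`: traversing to the ≤-largest `d` with `d ≲ d'`. -/
def TraverseFrom (H : NavData α) (d' : α) (H' : NavData α) : Prop :=
  ∃ d, H.IsBackStepTarget d' d ∧ H' = H.traverseTo d

/-- `ds` lists the first entries of the joint session future, in increasing order. -/
def FirstOfJSF (H : NavData α) (ds : List α) : Prop :=
  ds.Chain' H.lt ∧ (∀ d ∈ ds, d ∈ H.JSF) ∧
  ∀ e ∈ H.JSF, e ∉ ds → ∀ d ∈ ds, H.lt d e

/-- Patched traversal by +n: traverse successively to each of the first n entries of the
joint session future. -/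
def TraverseByPlus (H : NavData α) (n : ℕ) (H' : NavData α) : Prop :=
  ∃ ds : List α, ds.length = n ∧ H.FirstOfJSF ds ∧ H' = ds.foldl traverseTo H

/-- Patched traversal by −n: traverse successively from each successive back target. -/
inductive TraverseByMinus : NavData α → ℕ → NavData α → Prop
  | zero (H : NavData α) : TraverseByMinus H 0 H
  | succ {H H₁ H' : NavData α} {b : α} {n : ℕ} :
      H.IsBackTarget b → H.TraverseFrom b H₁ → TraverseByMinus H₁ n H' →
      TraverseByMinus H (n + 1) H'

/-- Traversal by an integer delta. -/
def TraverseBy (H : NavData α) (δ : ℤ) (H' : NavData α) : Prop :=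
  if 0 ≤ δ then H.TraverseByPlus δ.toNat H' else TraverseByMinus H (-δ).toNat H'

/-- The active-child relation `d ↠ e`. -/
def activeChild (H : NavData α) (d e : α) : Prop := H.child d e ∧ e ∈ H.A

def IsActiveRoot (H : NavData α) (d : α) : Prop :=
  d ∈ H.A ∧ ∀ e, ¬ H.child e d

/-- Fully active: reachable from an active root by active children. -/
def FullyActive (H : NavData α) (d : α) : Prop :=
  ∃ d₀, H.IsActiveRoot d₀ ∧ Relation.ReflTransGen H.activeChild d₀ d

/-- Restrict a navigation history away from a set `R` of documents. -/
def restrictAway (H : NavData α) (R : Set α) : NavData α where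
  D := H.D \ R
  A := H.A \ R
  child e f := H.child e f ∧ e ∉ R ∧ f ∉ R
  le e f := H.le e f ∧ e ∉ R ∧ f ∉ R
  sim e f := H.sim e f ∧ e ∉ R ∧ f ∉ R

/-- Deleting `d`: removing `d` together with all its →-descendants. -/
def deleteDoc (H : NavData α) (d : α) : NavData α :=
  H.restrictAway { e | Relation.ReflTransGen H.child d e }

/-- Replacing `d` by a fresh `d'`. -/
def replaceDoc (H : NavData α) (d d' : α) : NavData α where
  D := H.D ∪ {d'}
  A := (H.A \ {d}) ∪ {d'}
  child e f := H.child e f ∨ (H.child e d ∧ f = d')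
  le e f := H.le e f ∨ ((e ∈ H.D ∨ e = d') ∧ f = d')
  sim e f := H.sim e f ∨ (e = d' ∧ f = d') ∨ (H.sim e d ∧ f = d') ∨ (H.sim d f ∧ e = d')

/-- Deleting the entire joint session future (each member with its descendants). -/
def deleteJSF (H : NavData α) : NavData α :=
  H.restrictAway { e | ∃ j ∈ H.JSF, Relation.ReflTransGen H.child j e }

/-- Patched navigation from `d` to `d'`: delete the joint session future, then
replace `d` by `d'`. -/
def navigateFrom (H : NavData α) (d d' : α) : NavData α :=
  (H.deleteJSF).replaceDoc d d'

/-- Unpatched traversal by +n: traverse directly to the n-th entry of the joint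
session future (a single traversal). -/
def UnpatchedTraverseByPlus (H : NavData α) (n : ℕ) (H' : NavData α) : Prop :=
  ∃ ds : List α, H.FirstOfJSF ds ∧ ds.length = n ∧
    ∃ d, ds.getLast? = some d ∧ H' = H.traverseTo d

end NavData
theorem stmt2 {α : Type} (H : NavData α) (hH : H.IsNavHist) {d : α}
    (hd : d ∈ H.D) : (H.traverseTo d).IsNavHist := by
  obtain ⟨hfin, hAD, hcD, hirr, hpar, hrefl, htrans, hanti, hleD, htot,
    hsrefl, hsymm, hstrans, hsD, huniq, hcsim, hcle⟩ := hH
  refine ⟨hfin, ?_, hcD, hirr, hpar, hrefl, htrans, hanti, hleD, htot,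
    hsrefl, hsymm, hstrans, hsD, ?_, hcsim, hcle⟩
  · intro e he
    rcases he with ⟨heA, _⟩ | rfl
    · exact hAD heA
    · exact hd
  · intro e heD
    by_cases h : H.sim d e
    · refine ⟨d, ⟨Or.inr rfl, hsymm _ _ h⟩, ?_⟩
      rintro y ⟨(⟨hyA, hdy⟩ | rfl), hey⟩
      · exact absurd (hstrans _ _ _ h hey) hdy
      · rfl
    · obtain ⟨e', ⟨he'A, hee'⟩, hu⟩ := huniq e heD
      refine ⟨e', ⟨Or.inl ⟨he'A, fun hde' => h (hstrans _ _ _ hde' (hsymm _ _ hee'))⟩, hee'⟩, ?_⟩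
      rintro y ⟨(⟨hyA, _⟩ | rfl), hey⟩
      · exact hu y ⟨hyA, hey⟩
      · exact absurd (hsymm _ _ hey) h
end

section
/- Let H = (D, A, →, ≤, ∼) be a navigation history, let d ∈ A, and let d' ∉ D be fresh. Then replacing d by d' in H yields a navigation history. Concretely, H' = (D ∪ {d'}, A', →', ≤', ∼') defined by: A' = (A \ {d}) ∪ {d'}; e ≤' f iff (e ≤ f) or f = d'; e →' f iff (e → f) or (e → d and f = d'); e ∼' f iff (e ∼ f) or e = f = d' or (e ∼ d and f = d') or (d ∼ f and e = d'); satisfies all the navigation history axioms. -/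
theorem stmt6 {α : Type} (H : NavData α) (hH : H.IsNavHist) {d d' : α}
    (hd : d ∈ H.A) (hd' : d' ∉ H.D) : (H.replaceDoc d d').IsNavHist := by
  obtain ⟨hfin, hAD, hcdom, hacyc, hpar, hrefl, htrans, hanti, hledom, htot,
    hsrefl, hssymm, hstrans, hsdom, huniq, hcs, hcle⟩ := hH
  have hdD : d ∈ H.D := hAD hd
  have hdd' : d ≠ d' := fun h => hd' (h ▸ hdD)
  -- no relations involve d' in old H
  have hncd' : ∀ x y, H.child x y → x ≠ d' ∧ y ≠ d' := by
    intro x y h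
    exact ⟨fun e => hd' (e ▸ (hcdom x y h).1), fun e => hd' (e ▸ (hcdom x y h).2)⟩
  have hnsd' : ∀ x y, H.sim x y → x ≠ d' ∧ y ≠ d' := by
    intro x y h
    exact ⟨fun e => hd' (e ▸ (hsdom x y h).1), fun e => hd' (e ▸ (hsdom x y h).2)⟩
  have hnld' : ∀ x y, H.le x y → x ≠ d' ∧ y ≠ d' := by
    intro x y h
    exact ⟨fun e => hd' (e ▸ (hledom x y h).1), fun e => hd' (e ▸ (hledom x y h).2)⟩
  refine ⟨?_, ?_, ?_, ?_, ?_, ?_, ?_, ?_, ?_, ?_, ?_, ?_, ?_, ?_, ?_, ?_, ?_⟩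
  · exact hfin.union (Set.finite_singleton d')
  · rintro x (⟨hx, -⟩ | hx)
    · exact Or.inl (hAD hx)
    · exact Or.inr hx
  · rintro a b (h | ⟨h, rfl⟩)
    · exact ⟨Or.inl (hcdom a b h).1, Or.inl (hcdom a b h).2⟩
    · exact ⟨Or.inl (hcdom a d h).1, Or.inr rfl⟩
  · have key : ∀ a b, Relation.TransGen (H.replaceDoc d d').child a b →
        a ≠ d' ∧ (b ≠ d' → Relation.TransGen H.child a b) := by
      intro a b h
      induction h with
      | single h =>
        rcases h with h | ⟨h, rfl⟩
        · exact ⟨(hncd' _ _ h).1, fun _ => Relation.TransGen.single h⟩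
        · exact ⟨(hncd' _ _ h).1, fun hb => absurd rfl hb⟩
      | tail h1 h2 ih =>
        rename_i c b
        have hc : c ≠ d' := by
          rcases h2 with h2 | ⟨h2, rfl⟩
          · exact (hncd' _ _ h2).1
          · exact (hncd' _ _ h2).1
        refine ⟨ih.1, fun hb => ?_⟩
        rcases h2 with h2 | ⟨h2, rfl⟩
        · exact (ih.2 hc).tail h2
        · exact absurd rfl hb
    intro e he
    obtain ⟨hne, h2⟩ := key e e he
    exact hacyc e (h2 hne)
  · rintro p q e (h1 | ⟨h1, rfl⟩) h2
    · rcases h2 with h2 | ⟨h2, rfl⟩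
      · exact hpar p q e h1 h2
      · exact absurd rfl (hncd' _ _ h1).2
    · rcases h2 with h2 | ⟨h2, h3⟩
      · exact absurd rfl (hncd' _ _ h2).2
      · exact hpar p q d h1 h2
  · rintro a (ha | ha)
    · exact Or.inl (hrefl a ha)
    · exact Or.inr ⟨Or.inr ha, ha⟩
  · rintro a b c (h1 | ⟨h1, rfl⟩) h2
    · rcases h2 with h2 | ⟨-, rfl⟩
      · exact Or.inl (htrans a b c h1 h2)
      · exact Or.inr ⟨Or.inl (hledom a b h1).1, rfl⟩
    · rcases h2 with h2 | ⟨-, rfl⟩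
      · exact absurd rfl (hnld' _ _ h2).1
      · exact Or.inr ⟨h1, rfl⟩
  · rintro a b (h1 | ⟨h1, rfl⟩) h2
    · rcases h2 with h2 | ⟨-, rfl⟩
      · exact hanti a b h1 h2
      · exact absurd rfl (hnld' _ _ h1).1
    · rcases h2 with h2 | ⟨-, rfl⟩
      · exact absurd rfl (hnld' _ _ h2).1
      · rfl
  · rintro a b (h | ⟨h, rfl⟩)
    · exact ⟨Or.inl (hledom a b h).1, Or.inl (hledom a b h).2⟩
    · rcases h with h | h
      · exact ⟨Or.inl h, Or.inr rfl⟩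
      · exact ⟨Or.inr h, Or.inr rfl⟩
  · rintro a (ha | ha) b (hb | hb)
    · rcases htot a ha b hb with h | h
      · exact Or.inl (Or.inl h)
      · exact Or.inr (Or.inl h)
    · exact Or.inl (Or.inr ⟨Or.inl ha, hb⟩)
    · exact Or.inr (Or.inr ⟨Or.inl hb, ha⟩)
    · exact Or.inl (Or.inr ⟨Or.inr ha, hb⟩)
  · rintro a (ha | ha)
    · exact Or.inl (hsrefl a ha)
    · exact Or.inr (Or.inl ⟨ha, ha⟩)
  · rintro a b (h | ⟨rfl, rfl⟩ | ⟨h, rfl⟩ | ⟨h, rfl⟩)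
    · exact Or.inl (hssymm a b h)
    · exact Or.inr (Or.inl ⟨rfl, rfl⟩)
    · exact Or.inr (Or.inr (Or.inr ⟨hssymm a d h, rfl⟩))
    · exact Or.inr (Or.inr (Or.inl ⟨hssymm d b h, rfl⟩))
  · rintro a b c (h1 | ⟨rfl, rfl⟩ | ⟨h1, rfl⟩ | ⟨h1, rfl⟩)
      <;> rintro (h2 | ⟨hb2, rfl⟩ | ⟨h2, rfl⟩ | ⟨h2, hb2⟩)
    · exact Or.inl (hstrans a b c h1 h2)
    · exact absurd hb2 (hnsd' _ _ h1).2
    · exact Or.inr (Or.inr (Or.inl ⟨hstrans a b d h1 h2, rfl⟩))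
    · exact absurd hb2 (hnsd' _ _ h1).2
    · exact absurd rfl (hnsd' _ _ h2).1
    · exact Or.inr (Or.inl ⟨rfl, rfl⟩)
    · exact absurd rfl (hnsd' _ _ h2).1
    · exact Or.inr (Or.inr (Or.inr ⟨h2, rfl⟩))
    · exact absurd rfl (hnsd' _ _ h2).1
    · exact Or.inr (Or.inr (Or.inl ⟨h1, rfl⟩))
    · exact absurd rfl (hnsd' _ _ h2).1
    · exact Or.inl (hstrans a d c h1 h2)
    · exact Or.inr (Or.inr (Or.inr ⟨hstrans d b c h1 h2, rfl⟩))
    · exact absurd hb2 (hnsd' _ _ h1).2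
    · exact Or.inr (Or.inl ⟨rfl, rfl⟩)
    · exact absurd hb2 (hnsd' _ _ h1).2
  · rintro a b (h | ⟨rfl, rfl⟩ | ⟨h, rfl⟩ | ⟨h, rfl⟩)
    · exact ⟨Or.inl (hsdom a b h).1, Or.inl (hsdom a b h).2⟩
    · exact ⟨Or.inr rfl, Or.inr rfl⟩
    · exact ⟨Or.inl (hsdom a d h).1, Or.inr rfl⟩
    · exact ⟨Or.inr rfl, Or.inl (hsdom d b h).2⟩
  · -- unique active representative
    rintro a (ha | rfl)
    · obtain ⟨a₀, ⟨ha₀A, ha₀s⟩, ha₀u⟩ := huniq a ha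
      by_cases hcase : a₀ = d
      · subst hcase
        refine ⟨d', ⟨Or.inr rfl, Or.inr (Or.inr (Or.inl ⟨ha₀s, rfl⟩))⟩, ?_⟩
        rintro b ⟨hbA, hb | ⟨rfl, rfl⟩ | ⟨-, rfl⟩ | ⟨-, rfl⟩⟩
        · rcases hbA with ⟨hbA, hbd⟩ | hbd'
          · exact absurd (ha₀u b ⟨hbA, hb⟩) hbd
          · exact hbd'
        · exact absurd ha hd'
        · rfl
        · exact absurd ha hd'
      · refine ⟨a₀, ⟨Or.inl ⟨ha₀A, hcase⟩, Or.inl ha₀s⟩, ?_⟩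
        rintro b ⟨hbA, hb | ⟨rfl, rfl⟩ | ⟨hb, rfl⟩ | ⟨hb, rfl⟩⟩
        · rcases hbA with ⟨hbA, -⟩ | rfl
          · exact ha₀u b ⟨hbA, hb⟩
          · exact absurd rfl (hnsd' _ _ hb).2
        · exact absurd ha hd'
        · exact absurd (ha₀u d ⟨hd, hb⟩).symm hcase
        · exact absurd ha hd'
    · refine ⟨a, ⟨Or.inr rfl, Or.inr (Or.inl ⟨rfl, rfl⟩)⟩, ?_⟩
      rintro b ⟨hbA, hb | ⟨-, rfl⟩ | ⟨hb, rfl⟩ | ⟨hb, -⟩⟩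
      · exact absurd rfl (hnsd' _ _ hb).1
      · rfl
      · exact absurd rfl (hnsd' _ _ hb).1
      · rcases hbA with ⟨hbA, hbd⟩ | hbd'
        · obtain ⟨c, -, hcu⟩ := huniq d hdD
          exact absurd ((hcu b ⟨hbA, hb⟩).trans (hcu d ⟨hd, hsrefl d hdD⟩).symm) hbd
        · exact hbd'
  · rintro a b c (h1 | ⟨h1, rfl⟩) <;> rintro (h2 | ⟨hb2, rfl⟩ | ⟨h2, rfl⟩ | ⟨h2, hb2⟩)
    · exact Or.inl (hcs a b c h1 h2)
    · exact absurd hb2 (hncd' _ _ h1).2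
    · exact Or.inr ⟨hcs a b d h1 h2, rfl⟩
    · exact absurd hb2 (hncd' _ _ h1).2
    · exact absurd rfl (hnsd' _ _ h2).1
    · exact Or.inr ⟨h1, rfl⟩
    · exact absurd rfl (hnsd' _ _ h2).1
    · exact Or.inl (hcs a d c h1 h2)
  · rintro a b (h | ⟨h, rfl⟩)
    · exact Or.inl (hcle a b h)
    · exact Or.inr ⟨Or.inl (hcdom a d h).1, rfl⟩
end

section
/- Let H be a well-formed navigation history, say a document d 'can go back' if there exists c with c ≲ d, and let b be the back target of H: the ≤-largest active document that can go back (assuming one exists). Let H' be the result of traversing the history from b, i.e. traversing the history to the ≤-largest element c with c ≲ b. Then H' is well-formed. -/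
theorem stmt8 {α : Type} (H : NavData α) (hH : H.IsNavHist)
    (hwf : H.WellFormed) {b : α} (hb : H.IsBackTarget b)
    {H' : NavData α} (ht : H.TraverseFrom b H') : H'.WellFormed := by
  obtain ⟨hfin, hAD, hcD, hacyc, hpar, hrefl, htrans, hantisym, hleD, htot,
    hsrefl, hssymm, hstrans, hsD, huniq, hchild, hchron⟩ := hH
  obtain ⟨c, ⟨hcb, hmax⟩, rfl⟩ := ht
  obtain ⟨hbA, ⟨c0, hc0⟩, hbmax⟩ := hb
  -- key: if sim c x and lt c x then le b x
  have key : ∀ x, H.sim c x → H.lt c x → H.le b x := by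
    intro x hsimx ⟨hlecx, hnecx⟩
    have hxD : x ∈ H.D := (hsD _ _ hsimx).2
    have hbD : b ∈ H.D := hAD hbA
    rcases htot x hxD b hbD with hxb | hbx
    · by_cases hxeqb : x = b
      · exact hxeqb ▸ hrefl b hbD
      · have hsimxb : H.sim x b := hstrans _ _ _ (hssymm _ _ hsimx) hcb.1
        have hxc : H.le x c := hmax x ⟨hsimxb, hxb, hxeqb⟩
        exact absurd (hantisym _ _ hlecx hxc) hnecx
    · exact hbx
  intro a x y d hax hyd haA hdA
  simp only [NavData.traverseTo, Set.mem_setOf_eq] at haA hdA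
  rcases haA with ⟨haA, hnca⟩ | rfl
  · rcases hdA with ⟨hdA, hncd⟩ | heqd
    · exact hwf a x y d hax hyd haA hdA
    · rw [heqd]
      have hbx : H.le b x := hwf a x c b hax hcb haA hbA
      exact htrans _ _ _ hcb.2.1 hbx
  · -- a = c, c ≲ x
    have hbx : H.le b x := key x hax.1 hax.2
    rcases hdA with ⟨hdA, hncd⟩ | heqd
    · have hdb : H.le d b := hbmax d hdA ⟨y, hyd⟩
      exact htrans _ _ _ hdb hbx
    · rw [heqd]; exact htrans _ _ _ hcb.2.1 hbx
end

section
/- Let H be a well-formed navigation history with nonempty joint session future, let f be its forward target (the ≤-least element of the joint session future), and let H' be the result of traversing the history to f. Then f is the back target of H' (the ≤-largest active document of H' having some c ≲ f), and traversing the history from f in H' (i.e. traversing to the ≤-largest d with d ≲ f) yields H back again. -/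
theorem stmt9 {α : Type} (H : NavData α) (hH : H.IsNavHist)
    (hwf : H.WellFormed) {f : α} (hf : H.IsForwardTarget f) :
    (H.traverseTo f).IsBackTarget f ∧ (H.traverseTo f).TraverseFrom f H := by
  obtain ⟨hfin, hAD, hchD, hforest, hpar, hrefl, htrans, hanti, hleD, htot,
    hsrefl, hsymm, hstrans, hsD, hactive, hchsim, hchle⟩ := hH
  obtain ⟨⟨a, haA, hsaf, hlaf, hnaf⟩, hmin⟩ := hf
  have hfD : f ∈ H.D := (hleD _ _ hlaf).2
  have haD : a ∈ H.D := hAD haA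
  -- a is the unique active representative of f's session
  have huniq : ∀ e ∈ H.A, H.sim e f → e = a := by
    intro e heA hsef
    obtain ⟨x, hx, hux⟩ := hactive f hfD
    have h1 := hux e ⟨heA, hsymm _ _ hsef⟩
    have h2 := hux a ⟨haA, hsymm _ _ hsaf⟩
    rw [h1, h2]
  -- a is the largest element ≲ f
  have hmax : ∀ e, H.before e f → H.le e a := by
    intro e ⟨hsef, hlef, hnef⟩
    have heD : e ∈ H.D := (hleD _ _ hlef).1
    rcases htot e heD a haD with h | h
    · exact h
    · -- a ≤ e, so if e ≠ a then e ∈ JSF, so f ≤ e, contradiction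
      by_cases hea : e = a
      · exact hea ▸ hrefl a haD
      · have heJ : e ∈ H.JSF := by
          refine ⟨a, haA, hstrans _ _ _ hsaf (hsymm _ _ hsef), h, fun hc => hea hc.symm⟩
        exact absurd (hanti _ _ hlef (hmin e heJ)) hnef
  have hAeq : { e | (e ∈ (H.traverseTo f).A ∧ ¬ (H.traverseTo f).sim a e) ∨ e = a } = H.A := by
    ext e
    simp only [NavData.traverseTo, Set.mem_setOf_eq]
    constructor
    · rintro (⟨he, hnae⟩ | rfl)
      · rcases he with ⟨heA, _⟩ | rfl
        · exact heA
        · exact absurd hsaf hnae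
      · exact haA
    · intro heA
      by_cases hea : e = a
      · exact Or.inr hea
      · refine Or.inl ⟨Or.inl ⟨heA, ?_⟩, ?_⟩
        · intro hsfe
          exact hea (huniq e heA (hsymm _ _ hsfe))
        · intro hsae
          exact hea (huniq e heA (hstrans _ _ _ (hsymm _ _ hsae) hsaf))
  constructor
  · refine ⟨Or.inr rfl, ⟨a, hsaf, hlaf, hnaf⟩, ?_⟩
    rintro d (⟨hdA, hnfd⟩ | hdf) ⟨c, hscd, hlcd, hncd⟩
    · exact hwf a f c d ⟨hsaf, hlaf, hnaf⟩ ⟨hscd, hlcd, hncd⟩ haA hdA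
    · exact hdf ▸ hrefl f hfD
  · refine ⟨a, ⟨⟨hsaf, hlaf, hnaf⟩, fun e he => hmax e he⟩, ?_⟩
    have : (H.traverseTo f).traverseTo a = H := by
      show NavData.mk _ _ _ _ _ = H
      rw [hAeq]; rfl
    exact this.symm
end

section
/- Let H be a well-formed navigation history with a back target b (the ≤-largest active document that can go back), and let H' be the result of traversing the history from b. Then b is the forward target of H' (the ≤-least element of H''s joint session future), and traversing the history to b in H' yields H back again. -/
theorem stmt10 {α : Type} (H : NavData α) (hH : H.IsNavHist)
    (hwf : H.WellFormed) {b : α} (hb : H.IsBackTarget b)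
    {H' : NavData α} (ht : H.TraverseFrom b H') :
    H'.IsForwardTarget b ∧ H'.traverseTo b = H := by
  obtain ⟨hfin, hAD, hchD, hacyc, hpar, hrefl, htrans, hanti, hleD, htot,
    hsrefl, hsymm, hstrans, hsimD, huniq, hchsim, hchle⟩ := hH
  obtain ⟨d, ⟨hdb, hdmax⟩, rfl⟩ := ht
  obtain ⟨hbA, hcgb, hbmax⟩ := hb
  obtain ⟨hsdb, hledb, hnedb⟩ := hdb
  have hbD : b ∈ H.D := hAD hbA
  have hdD : d ∈ H.D := (hsimD d b hsdb).1
  constructor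
  · constructor
    · exact ⟨d, Or.inr rfl, hsdb, hledb, hnedb⟩
    · rintro e ⟨a, ha, hae⟩
      rcases ha with ⟨haA, hnsim⟩ | rfl
      · exact hwf a e d b hae ⟨hsdb, hledb, hnedb⟩ haA hbA
      · -- a = d, d ≲ e; show b ≤ e
        have heD : e ∈ H.D := (hleD _ _ hae.2.1).2
        rcases htot b hbD e heD with h | h
        · exact h
        · -- e ≤ b
          by_cases hebeq : e = b
          · rw [hebeq]; exact hrefl _ hbD
          · have heb : H.before e b :=
              ⟨hstrans _ _ _ (hsymm _ _ hae.1) hsdb, h, hebeq⟩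
            have : H.le e a := hdmax e heb
            exact absurd (hanti _ _ hae.2.1 this) hae.2.2
  · -- traverseTo d then traverseTo b gives back H
    cases H with
    | mk D A child le sim =>
      simp only [NavData.traverseTo]
      congr 1
      ext e
      simp only [Set.mem_setOf_eq]
      constructor
      · rintro (⟨(⟨heA, hns⟩ | rfl), hnsb⟩ | rfl)
        · exact heA
        · exact absurd (hsymm _ _ hsdb) hnsb
        · exact hbA
      · intro heA
        by_cases hsb : sim b e
        · right
          obtain ⟨x, ⟨-, -⟩, hux⟩ := huniq b hbD
          have h1 := hux e ⟨heA, hsb⟩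
          have h2 := hux b ⟨hbA, hsrefl b hbD⟩
          rw [h1, h2]
        · left
          refine ⟨?_, hsb⟩
          left
          exact ⟨heA, fun hsde => hsb (hstrans _ _ _ (hsymm _ _ hsdb) hsde)⟩
end

section
/- Let H be a navigation history and n ≥ 0. H traverses the history by +(n+1) to H' if and only if H traverses to its forward target f (the ≤-least element of the joint session future) yielding some H'', and H'' traverses the history by +n to H'. -/
namespace NavData

variable {α : Type}

lemma lt_trans' (H : NavData α) (hH : H.IsNavHist) : Transitive H.lt := by
  obtain ⟨-, -, -, -, -, -, htr, hanti, -⟩ := hH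
  rintro a b c ⟨hab, hne⟩ ⟨hbc, hne'⟩
  refine ⟨htr _ _ _ hab hbc, ?_⟩
  rintro rfl
  exact hne' (hanti _ _ hbc hab)

lemma jsf_traverseTo (H : NavData α) (hH : H.IsNavHist) {f : α}
    (hf : H.IsForwardTarget f) :
    (H.traverseTo f).JSF = H.JSF \ {f} := by
  obtain ⟨-, -, -, -, -, -, htr, hanti, -, -, -, hsymm, hstrans, -⟩ := hH
  obtain ⟨⟨a, ha, hsaf, hlaf, hnaf⟩, hmin⟩ := hf
  ext e
  constructor
  · rintro ⟨d, hd, hsde, hlde, hnde⟩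
    rcases hd with ⟨hdA, hnsim⟩ | rfl
    · exact ⟨⟨d, hdA, hsde, hlde, hnde⟩, fun he => hnsim (hsymm _ _ (he ▸ hsde))⟩
    · refine ⟨⟨a, ha, hstrans _ _ _ hsaf hsde, htr _ _ _ hlaf hlde, ?_⟩, fun h => hnde (Set.mem_singleton_iff.mp h).symm⟩
      rintro rfl
      exact hnaf (hanti _ _ hlaf hlde)
  · rintro ⟨⟨b, hb, hsbe, hlbe, hnbe⟩, hne⟩
    by_cases hsim : H.sim f b
    · refine ⟨f, Or.inr rfl, hstrans _ _ _ hsim hsbe, ?_, fun h => hne (h ▸ rfl)⟩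
      exact hmin e ⟨b, hb, hsbe, hlbe, hnbe⟩
    · exact ⟨b, Or.inl ⟨hb, hsim⟩, hsbe, hlbe, hnbe⟩

end NavData
theorem stmt11 {α : Type} (H : NavData α) (hH : H.IsNavHist)
    (n : ℕ) (H' : NavData α) :
    H.TraverseByPlus (n + 1) H' ↔
      ∃ f, H.IsForwardTarget f ∧ (H.traverseTo f).TraverseByPlus n H' := by
  have hlt := H.lt_trans' hH
  constructor
  · rintro ⟨ds, hlen, ⟨hchain, hmem, hlast⟩, rfl⟩
    obtain ⟨f, t, rfl⟩ : ∃ f t, ds = f :: t := by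
      cases ds with
      | nil => simp at hlen
      | cons f t => exact ⟨f, t, rfl⟩
    have hfJ : f ∈ H.JSF := hmem f (by simp)
    have hfD : f ∈ H.D := by
      obtain ⟨d, -, -, hle, -⟩ := hfJ
      exact (hH.2.2.2.2.2.2.2.2.1 _ _ hle).2
    -- f lt every element of t
    haveI : IsTrans α H.lt := ⟨fun _ _ _ h h2 => hlt h h2⟩
    have hft : ∀ d ∈ t, H.lt f d := by
      have := (List.isChain_iff_pairwise (R := H.lt)).mp hchain
      intro d hd
      exact (List.pairwise_cons.mp this).1 d hd
    have hfwd : H.IsForwardTarget f := by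
      refine ⟨hfJ, fun e he => ?_⟩
      by_cases h : e ∈ f :: t
      · rcases List.mem_cons.mp h with h | h
        · rw [h]; exact hH.2.2.2.2.2.1 f hfD
        · exact (hft e h).1
      · exact (hlast e he h f (by simp)).1
    have hJ' : (H.traverseTo f).JSF = H.JSF \ {f} := H.jsf_traverseTo hH hfwd
    refine ⟨f, hfwd, t, by simpa using hlen, ⟨?_, ?_, ?_⟩, by simp⟩
    · exact hchain.tail
    · intro d hd
      rw [hJ']
      exact ⟨hmem d (by simp [hd]), (hft d hd).2.symm⟩
    · intro e he hne d hd
      rw [hJ'] at he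
      have : e ∉ f :: t := by
        simp only [List.mem_cons]
        rintro (rfl | h)
        · exact he.2 rfl
        · exact hne h
      exact hlast e he.1 this d (by simp [hd])
  · rintro ⟨f, hfwd, t, hlen, ⟨hchain, hmem, hlast⟩, rfl⟩
    have hJ' : (H.traverseTo f).JSF = H.JSF \ {f} := H.jsf_traverseTo hH hfwd
    have hfD : f ∈ H.D := by
      obtain ⟨d, -, -, hle, -⟩ := hfwd.1
      exact (hH.2.2.2.2.2.2.2.2.1 _ _ hle).2
    have hft : ∀ d ∈ t, H.lt f d := by
      intro d hd
      have := hmem d hd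
      rw [hJ'] at this
      exact ⟨hfwd.2 d this.1, fun h => this.2 (h ▸ rfl)⟩
    refine ⟨f :: t, by simp [hlen], ⟨?_, ?_, ?_⟩, by simp⟩
    · cases t with
      | nil => exact List.isChain_singleton f
      | cons b u =>
        exact List.IsChain.cons_cons (hft b (by simp)) hchain
    · intro d hd
      rcases List.mem_cons.mp hd with rfl | hd
      · exact hfwd.1
      · exact ((hJ' ▸ hmem d hd : d ∈ H.JSF \ {f})).1
    · intro e he hne d hd
      have hnef : e ≠ f := by rintro rfl; exact hne (by simp)
      have heJ' : e ∈ (H.traverseTo f).JSF := by rw [hJ']; exact ⟨he, hnef⟩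
      rcases List.mem_cons.mp hd with rfl | hd
      · exact ⟨hfwd.2 e he, hnef.symm⟩
      · exact hlast e heJ' (fun h => hne (by simp [h])) d hd
end

section
/- Fundamental property of traversal: for any well-formed navigation history H and integers δ, δ', if H traverses the history by δ to H' and H' traverses the history by δ' to H'', then H traverses the history by δ + δ' to H''. -/
namespace NavData

variable {α : Type}

/-! ### Auxiliary machinery -/

def StepN (R : NavData α → NavData α → Prop) : ℕ → NavData α → NavData α → Prop
  | 0, H, H' => H = H'
  | n + 1, H, H' => ∃ X, R H X ∧ StepN R n X H'

def Step (H H' : NavData α) : Prop := ∃ f, H.IsForwardTarget f ∧ H' = H.traverseTo f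

def BStep (H H' : NavData α) : Prop := ∃ b, H.IsBackTarget b ∧ H.TraverseFrom b H'

lemma traverseTo_A (H : NavData α) (d : α) :
    (H.traverseTo d).A = { e | (e ∈ H.A ∧ ¬ H.sim d e) ∨ e = d } := rfl

lemma eq_of_A_eq {H H' : NavData α} (hD : H.D = H'.D) (hA : H.A = H'.A)
    (hc : H.child = H'.child) (hl : H.le = H'.le) (hs : H.sim = H'.sim) : H = H' := by
  cases H; cases H'
  simp only at hD hA hc hl hs
  subst hD; subst hA; subst hc; subst hl; subst hs; rfl

/-! accessors for the axioms -/

lemma IsNavHist.AD {H : NavData α} (h : H.IsNavHist) : H.A ⊆ H.D := h.2.1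

lemma IsNavHist.lerefl {H : NavData α} (h : H.IsNavHist) : ∀ d ∈ H.D, H.le d d :=
  h.2.2.2.2.2.1

lemma IsNavHist.letrans {H : NavData α} (h : H.IsNavHist) :
    ∀ d e f, H.le d e → H.le e f → H.le d f := h.2.2.2.2.2.2.1

lemma IsNavHist.anti {H : NavData α} (h : H.IsNavHist) :
    ∀ d e, H.le d e → H.le e d → d = e := h.2.2.2.2.2.2.2.1

lemma IsNavHist.leD {H : NavData α} (h : H.IsNavHist) :
    ∀ d e, H.le d e → d ∈ H.D ∧ e ∈ H.D := h.2.2.2.2.2.2.2.2.1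

lemma IsNavHist.tot {H : NavData α} (h : H.IsNavHist) :
    ∀ d ∈ H.D, ∀ e ∈ H.D, H.le d e ∨ H.le e d := h.2.2.2.2.2.2.2.2.2.1

lemma IsNavHist.simrefl {H : NavData α} (h : H.IsNavHist) :
    ∀ d ∈ H.D, H.sim d d := h.2.2.2.2.2.2.2.2.2.2.1

lemma IsNavHist.simsymm {H : NavData α} (h : H.IsNavHist) :
    ∀ d e, H.sim d e → H.sim e d := h.2.2.2.2.2.2.2.2.2.2.2.1

lemma IsNavHist.simtrans {H : NavData α} (h : H.IsNavHist) :
    ∀ d e f, H.sim d e → H.sim e f → H.sim d f := h.2.2.2.2.2.2.2.2.2.2.2.2.1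

lemma IsNavHist.simD {H : NavData α} (h : H.IsNavHist) :
    ∀ d e, H.sim d e → d ∈ H.D ∧ e ∈ H.D := h.2.2.2.2.2.2.2.2.2.2.2.2.2.1

lemma IsNavHist.uniq {H : NavData α} (h : H.IsNavHist) :
    ∀ d ∈ H.D, ∃! d', d' ∈ H.A ∧ H.sim d d' := h.2.2.2.2.2.2.2.2.2.2.2.2.2.2.1

/-- Two active documents in the same session are equal. -/
lemma IsNavHist.uniqA {H : NavData α} (h : H.IsNavHist) {a e : α}
    (ha : a ∈ H.A) (he : e ∈ H.A) (hs : H.sim a e) : a = e := by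
  obtain ⟨d', _, hu⟩ := h.uniq a (h.AD ha)
  have h1 := hu a ⟨ha, h.simrefl a (h.AD ha)⟩
  have h2 := hu e ⟨he, hs⟩
  rw [h1, h2]

/-! basic order facts -/

lemma IsNavHist.lt_of_le_of_lt {H : NavData α} (h : H.IsNavHist) {a b c : α}
    (h1 : H.le a b) (h2 : H.lt b c) : H.lt a c := by
  refine ⟨h.letrans _ _ _ h1 h2.1, ?_⟩
  rintro rfl
  exact h2.2 (h.anti _ _ h2.1 h1)

lemma IsNavHist.lt_of_lt_of_le {H : NavData α} (h : H.IsNavHist) {a b c : α}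
    (h1 : H.lt a b) (h2 : H.le b c) : H.lt a c := by
  refine ⟨h.letrans _ _ _ h1.1 h2, ?_⟩
  rintro rfl
  exact h1.2 (h.anti _ _ h1.1 h2)

lemma IsNavHist.not_lt_of_le {H : NavData α} (h : H.IsNavHist) {a b : α}
    (h1 : H.le a b) (h2 : H.lt b a) : False :=
  h2.2 (h.anti _ _ h2.1 h1)

lemma IsNavHist.before_trans {H : NavData α} (h : H.IsNavHist) {a b c : α}
    (h1 : H.before a b) (h2 : H.before b c) : H.before a c :=
  ⟨h.simtrans _ _ _ h1.1 h2.1, h.lt_of_le_of_lt h1.2.1 h2.2⟩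

lemma IsNavHist.before_D {H : NavData α} (h : H.IsNavHist) {a b : α}
    (h1 : H.before a b) : a ∈ H.D ∧ b ∈ H.D := h.simD _ _ h1.1

lemma mem_D_of_mem_JSF {H : NavData α} (h : H.IsNavHist) {e : α} (he : e ∈ H.JSF) :
    e ∈ H.D := by
  obtain ⟨a, _, hb⟩ := he
  exact (h.before_D hb).2

/-- `traverseTo` preserves the axioms. -/
lemma IsNavHist.traverseTo {H : NavData α} (h : H.IsNavHist) {d : α} (hd : d ∈ H.D) :
    (H.traverseTo d).IsNavHist := by
  obtain ⟨h1, h2, h3, h4, h5, h6, h7, h8, h9, h10, h11, h12, h13, h14, h15, h16, h17⟩ := h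
  have h' : H.IsNavHist :=
    ⟨h1, h2, h3, h4, h5, h6, h7, h8, h9, h10, h11, h12, h13, h14, h15, h16, h17⟩
  refine ⟨h1, ?_, h3, h4, h5, h6, h7, h8, h9, h10, h11, h12, h13, h14, ?_, h16, h17⟩
  · rintro e (⟨heA, -⟩ | rfl)
    · exact h2 heA
    · exact hd
  · intro x hx
    by_cases hxd : H.sim x d
    · refine ⟨d, ⟨Or.inr rfl, hxd⟩, ?_⟩
      rintro e ⟨(⟨heA, hde⟩ | rfl), hxe⟩
      · exact absurd (h13 _ _ _ (h12 _ _ hxd) hxe) hde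
      · rfl
    · obtain ⟨a, ⟨haA, hxa⟩, hu⟩ := h15 x hx
      have hda : ¬ H.sim d a := fun hda => hxd (h13 _ _ _ hxa (h12 _ _ hda))
      refine ⟨a, ⟨Or.inl ⟨haA, hda⟩, hxa⟩, ?_⟩
      rintro e ⟨(⟨heA, -⟩ | rfl), hxe⟩
      · exact hu e ⟨heA, hxe⟩
      · exact absurd hxe hxd

end NavData

namespace NavData

variable {α : Type} {H H₁ : NavData α}

/-! ### Forward steps -/

lemma traverse_twice_eq (H : NavData α) (x y : α)
    (h : ((H.traverseTo x).traverseTo y).A = H.A) : (H.traverseTo x).traverseTo y = H :=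
  eq_of_A_eq rfl h rfl rfl rfl

lemma mem_JSF_iff {H : NavData α} {e : α} :
    e ∈ H.JSF ↔ ∃ a ∈ H.A, H.before a e := Iff.rfl

lemma forward_JSF (h : H.IsNavHist) {f : α} (hf : H.IsForwardTarget f) :
    (H.traverseTo f).JSF = H.JSF \ {f} := by
  obtain ⟨hfJ, hmin⟩ := hf
  obtain ⟨a₀, ha₀A, ha₀f⟩ := hfJ
  ext e
  simp only [Set.mem_diff, Set.mem_singleton_iff, mem_JSF_iff, traverseTo_A,
    Set.mem_setOf_eq]
  constructor
  · rintro ⟨a, (⟨haA, hfa⟩ | rfl), hae⟩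
    · refine ⟨⟨a, haA, hae⟩, ?_⟩
      rintro rfl
      exact hfa (h.simsymm _ _ hae.1)
    · exact ⟨⟨a₀, ha₀A, h.before_trans ha₀f hae⟩, fun he => hae.2.2 he.symm⟩
  · rintro ⟨⟨a, haA, hae⟩, hef⟩
    by_cases hfa : H.sim f a
    · exact ⟨f, Or.inr rfl, h.simtrans _ _ _ hfa hae.1,
        hmin e ⟨a, haA, hae⟩, fun hh => hef hh.symm⟩
    · exact ⟨a, Or.inl ⟨haA, hfa⟩, hae⟩

lemma wf_forward (h : H.IsNavHist) (hwf : H.WellFormed) {f : α}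
    (hf : H.IsForwardTarget f) : (H.traverseTo f).WellFormed := by
  obtain ⟨⟨a₀, ha₀A, ha₀f⟩, hmin⟩ := hf
  rintro a b c e hab hce (⟨haA, -⟩ | rfl) heA
  · rcases heA with ⟨heA, -⟩ | rfl
    · exact hwf a b c e hab hce haA heA
    · exact hmin b ⟨a, haA, hab⟩
  · rcases heA with ⟨heA, -⟩ | rfl
    · exact hwf a₀ b c e (h.before_trans ha₀f hab) hce ha₀A heA
    · exact hab.2.1

lemma Step.navhist (h : H.IsNavHist) (hs : Step H H₁) : H₁.IsNavHist := by
  obtain ⟨f, hf, rfl⟩ := hs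
  exact h.traverseTo (mem_D_of_mem_JSF h hf.1)

lemma Step.wf (h : H.IsNavHist) (hwf : H.WellFormed) (hs : Step H H₁) :
    H₁.WellFormed := by
  obtain ⟨f, hf, rfl⟩ := hs
  exact wf_forward h hwf hf

lemma Step.unique (h : H.IsNavHist) {X Y : NavData α} (h1 : Step H X) (h2 : Step H Y) :
    X = Y := by
  obtain ⟨f, hf, rfl⟩ := h1
  obtain ⟨g, hg, rfl⟩ := h2
  rw [h.anti f g (hf.2 g hg.1) (hg.2 f hf.1)]

lemma Step.bstep (h : H.IsNavHist) (hwf : H.WellFormed) (hs : Step H H₁) :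
    BStep H₁ H := by
  obtain ⟨f, hf, rfl⟩ := hs
  obtain ⟨⟨a₀, ha₀A, ha₀f⟩, hmin⟩ := hf
  refine ⟨f, ⟨Or.inr rfl, ⟨a₀, ha₀f⟩, ?_⟩, a₀, ⟨ha₀f, ?_⟩, ?_⟩
  · rintro e (⟨heA, -⟩ | rfl) ⟨c, hce⟩
    · exact hwf a₀ f c e ha₀f hce ha₀A heA
    · exact h.lerefl _ (h.before_D ha₀f).2
  · intro e hef
    rcases h.tot e (h.before_D hef).1 a₀ (h.AD ha₀A) with hle | hle
    · exact hle
    · by_cases hea : e = a₀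
      · subst hea; exact hle
      · have heJ : e ∈ H.JSF :=
          ⟨a₀, ha₀A, h.simtrans _ _ _ ha₀f.1 (h.simsymm _ _ hef.1), hle, fun hh => hea hh.symm⟩
        exact ((h.not_lt_of_le (hmin e heJ) hef.2)).elim
  · refine (traverse_twice_eq H f a₀ ?_).symm
    ext e
    simp only [traverseTo_A, Set.mem_setOf_eq]
    constructor
    · rintro (⟨(⟨heA, -⟩ | rfl), ha₀e⟩ | rfl)
      · exact heA
      · exact absurd ha₀f.1 ha₀e
      · exact ha₀A
    · intro heA
      by_cases hse : H.sim a₀ e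
      · exact Or.inr (h.uniqA ha₀A heA hse).symm
      · exact Or.inl ⟨Or.inl ⟨heA, fun hfe => hse (h.simtrans _ _ _ ha₀f.1 hfe)⟩, hse⟩

/-! ### Backward steps -/

lemma le_b_of_before (h : H.IsNavHist) {b d : α} (hd : H.IsBackStepTarget b d)
    {b' : α} (hdb' : H.before d b') : H.le b b' := by
  rcases h.tot b (h.before_D hd.1).2 b' (h.before_D hdb').2 with hle | hle
  · exact hle
  · by_cases hbb : b' = b
    · subst hbb; exact hle
    · have hb'b : H.before b' b :=
        ⟨h.simtrans _ _ _ (h.simsymm _ _ hdb'.1) hd.1.1, hle, hbb⟩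
      exact (h.not_lt_of_le (hd.2 b' hb'b) hdb'.2).elim

lemma wf_backward (h : H.IsNavHist) (hwf : H.WellFormed) {b d : α}
    (hb : H.IsBackTarget b) (hd : H.IsBackStepTarget b d) :
    (H.traverseTo d).WellFormed := by
  rintro a b' c e hab hce (⟨haA, -⟩ | rfl) heA
  · rcases heA with ⟨heA, -⟩ | rfl
    · exact hwf a b' c e hab hce haA heA
    · exact h.letrans _ _ _ hd.1.2.1 (hwf a b' _ b hab hd.1 haA hb.1)
  · rcases heA with ⟨heA, -⟩ | rfl
    · exact h.letrans _ _ _ (hb.2.2 e heA ⟨c, hce⟩) (le_b_of_before h hd hab)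
    · exact hab.2.1

lemma BStep.navhist (h : H.IsNavHist) (hs : BStep H H₁) : H₁.IsNavHist := by
  obtain ⟨b, hb, d, hd, rfl⟩ := hs
  exact h.traverseTo (h.before_D hd.1).1

lemma BStep.wf (h : H.IsNavHist) (hwf : H.WellFormed) (hs : BStep H H₁) :
    H₁.WellFormed := by
  obtain ⟨b, hb, d, hd, rfl⟩ := hs
  exact wf_backward h hwf hb hd

lemma BStep.unique (h : H.IsNavHist) {X Y : NavData α} (h1 : BStep H X)
    (h2 : BStep H Y) : X = Y := by
  obtain ⟨b, hb, d, hd, rfl⟩ := h1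
  obtain ⟨b', hb', d', hd', rfl⟩ := h2
  have hbb : b = b' := h.anti _ _ (hb'.2.2 b hb.1 hb.2.1) (hb.2.2 b' hb'.1 hb'.2.1)
  subst hbb
  rw [h.anti d d' (hd'.2 d hd.1) (hd.2 d' hd'.1)]

lemma BStep.step (h : H.IsNavHist) (hwf : H.WellFormed) (hs : BStep H H₁) :
    Step H₁ H := by
  obtain ⟨b, hb, d, hd, rfl⟩ := hs
  refine ⟨b, ⟨⟨d, Or.inr rfl, hd.1⟩, ?_⟩, ?_⟩
  · rintro e ⟨a, (⟨haA, -⟩ | rfl), hae⟩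
    · exact hwf a e d b hae hd.1 haA hb.1
    · exact le_b_of_before h hd hae
  · refine (traverse_twice_eq H d b ?_).symm
    ext e
    simp only [traverseTo_A, Set.mem_setOf_eq]
    constructor
    · rintro (⟨(⟨heA, -⟩ | rfl), hbe⟩ | rfl)
      · exact heA
      · exact absurd (h.simsymm _ _ hd.1.1) hbe
      · exact hb.1
    · intro heA
      by_cases hbe : H.sim b e
      · exact Or.inr (h.uniqA hb.1 heA hbe).symm
      · exact Or.inl ⟨Or.inl ⟨heA,
          fun hde => hbe (h.simtrans _ _ _ (h.simsymm _ _ hd.1.1) hde)⟩, hbe⟩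

end NavData

namespace NavData

variable {α : Type} {H H₁ : NavData α}

/-! ### `TraverseByPlus` as iterated `Step` -/

lemma chain'_lt_head (h : H.IsNavHist) :
    ∀ {ds : List α} {d e : α}, List.Chain' H.lt (d :: ds) → e ∈ ds → H.lt d e := by
  intro ds
  induction ds with
  | nil => intro d e _ he; cases he
  | cons x tl ih =>
    intro d e hch he
    have hdx : H.lt d x := (List.isChain_cons_cons.1 hch).1
    rcases List.mem_cons.1 he with rfl | he'
    · exact hdx
    · exact h.lt_of_le_of_lt hdx.1 (ih (List.isChain_cons_cons.1 hch).2 he')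

lemma firstOfJSF_head (h : H.IsNavHist) {d : α} {ds : List α}
    (hds : H.FirstOfJSF (d :: ds)) : H.IsForwardTarget d := by
  refine ⟨hds.2.1 d (List.mem_cons_self (a := d) (l := ds)), ?_⟩
  intro e he
  by_cases hmem : e ∈ d :: ds
  · rcases List.mem_cons.1 hmem with rfl | hmem'
    · exact h.lerefl e (mem_D_of_mem_JSF h he)
    · exact (chain'_lt_head h hds.1 hmem').1
  · exact (hds.2.2 e he hmem d (List.mem_cons_self (a := d) (l := ds))).1

lemma firstOfJSF_tail (h : H.IsNavHist) {d : α} {ds : List α}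
    (hds : H.FirstOfJSF (d :: ds)) : (H.traverseTo d).FirstOfJSF ds := by
  have hft := firstOfJSF_head h hds
  have hJ := forward_JSF h hft
  refine ⟨hds.1.tail, ?_, ?_⟩
  · intro e he
    rw [hJ]
    exact ⟨hds.2.1 e (List.mem_cons_of_mem d he), fun hh =>
      (chain'_lt_head h hds.1 he).2 (Set.mem_singleton_iff.1 hh).symm⟩
  · intro e he hem x hx
    rw [hJ] at he
    refine hds.2.2 e he.1 ?_ x (List.mem_cons_of_mem d hx)
    intro hmem
    rcases List.mem_cons.1 hmem with rfl | hmem'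
    · exact he.2 rfl
    · exact hem hmem'

lemma stepN_of_first (h : H.IsNavHist) (ds : List α) (hds : H.FirstOfJSF ds) :
    StepN Step ds.length H (ds.foldl traverseTo H) := by
  induction ds generalizing H with
  | nil => rfl
  | cons d ds ih =>
    have hft := firstOfJSF_head h hds
    have h' : (H.traverseTo d).IsNavHist := h.traverseTo (mem_D_of_mem_JSF h hft.1)
    exact ⟨H.traverseTo d, ⟨d, hft, rfl⟩, ih h' (firstOfJSF_tail h hds)⟩

lemma stepN_of_plus (h : H.IsNavHist) {n : ℕ} (hp : H.TraverseByPlus n H₁) :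
    StepN Step n H H₁ := by
  obtain ⟨ds, rfl, hds, rfl⟩ := hp
  exact stepN_of_first h ds hds

lemma plus_of_stepN (h : H.IsNavHist) {n : ℕ} (hs : StepN Step n H H₁) :
    H.TraverseByPlus n H₁ := by
  induction n generalizing H with
  | zero =>
    exact ⟨[], rfl, ⟨List.isChain_nil, fun d hd => absurd hd (List.not_mem_nil (a := d)),
      fun e _ _ d hd => absurd hd (List.not_mem_nil (a := d))⟩, Eq.symm hs⟩
  | succ n ih =>
    obtain ⟨X, ⟨f, hf, rfl⟩, hX⟩ := hs
    have h' : (H.traverseTo f).IsNavHist := h.traverseTo (mem_D_of_mem_JSF h hf.1)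
    obtain ⟨ds, hlen, hds, rfl⟩ := ih h' hX
    have hmemJ : ∀ x ∈ ds, x ∈ H.JSF \ {f} := by
      intro x hx
      rw [← forward_JSF h hf]
      exact hds.2.1 x hx
    refine ⟨f :: ds, by simp [hlen], ⟨?_, ?_, ?_⟩, rfl⟩
    · refine List.isChain_cons.2 ?_
      refine ⟨?_, hds.1⟩
      intro x hx
      have hx' := hmemJ x (List.mem_of_mem_head? hx)
      exact ⟨hf.2 x hx'.1, fun hfx => hx'.2 (Set.mem_singleton_iff.2 hfx.symm)⟩
    · intro e he
      rcases List.mem_cons.1 he with rfl | he'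
      · exact hf.1
      · exact (hmemJ e he').1
    · intro e he hem x hx
      rcases List.mem_cons.1 hx with rfl | hx'
      · refine ⟨hf.2 e he, ?_⟩
        rintro rfl
        exact hem (List.mem_cons_self (a := x) (l := ds))
      · have he' : e ∈ (H.traverseTo f).JSF := by
          rw [forward_JSF h hf]
          refine ⟨he, fun hh => hem ?_⟩
          rw [Set.mem_singleton_iff] at hh
          exact hh ▸ List.mem_cons_self (a := f) (l := ds)
        exact hds.2.2 e he' (fun hh => hem (List.mem_cons_of_mem f hh)) x hx'

/-! ### `TraverseByMinus` as iterated `BStep` -/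

lemma bstepN_of_minus {n : ℕ} (hm : TraverseByMinus H n H₁) :
    StepN BStep n H H₁ := by
  induction hm with
  | zero => rfl
  | succ hb ht _ ih => exact ⟨_, ⟨_, hb, ht⟩, ih⟩

lemma minus_of_bstepN {n : ℕ} (hs : StepN BStep n H H₁) :
    TraverseByMinus H n H₁ := by
  induction n generalizing H with
  | zero => exact hs ▸ TraverseByMinus.zero H
  | succ n ih =>
    obtain ⟨X, ⟨b, hb, ht⟩, hX⟩ := hs
    exact TraverseByMinus.succ hb ht (ih hX)

/-! ### `StepN` machinery -/

lemma stepN_add {R : NavData α → NavData α → Prop} :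
    ∀ {m n : ℕ} {H X H₁ : NavData α},
      StepN R m H X → StepN R n X H₁ → StepN R (m + n) H H₁ := by
  intro m
  induction m with
  | zero => intro n H X H₁ h1 h2; rw [Nat.zero_add]; exact h1 ▸ h2
  | succ m ih =>
    intro n H X H₁ h1 h2
    obtain ⟨Y, hY, h1'⟩ := h1
    rw [Nat.succ_add]
    exact ⟨Y, hY, ih h1' h2⟩

lemma stepN_succ_iff {R : NavData α → NavData α → Prop} :
    ∀ {n : ℕ} {H H₁ : NavData α},
      StepN R (n + 1) H H₁ ↔ ∃ X, StepN R n H X ∧ R X H₁ := by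
  intro n
  induction n with
  | zero =>
    intro H H₁
    constructor
    · rintro ⟨X, hR, rfl⟩; exact ⟨H, rfl, hR⟩
    · rintro ⟨X, rfl, hR⟩; exact ⟨H₁, hR, rfl⟩
  | succ n ih =>
    intro H H₁
    constructor
    · rintro ⟨X, hR, h2⟩
      obtain ⟨Y, hY, hR'⟩ := ih.1 h2
      exact ⟨Y, ⟨X, hR, hY⟩, hR'⟩
    · rintro ⟨Y, ⟨X, hR, hY⟩, hR'⟩
      exact ⟨X, hR, ih.2 ⟨Y, hY, hR'⟩⟩

def Good (H : NavData α) : Prop := H.IsNavHist ∧ H.WellFormed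

lemma Good.step (hG : Good H) (hs : Step H H₁) : Good H₁ :=
  ⟨hs.navhist hG.1, hs.wf hG.1 hG.2⟩

lemma Good.bstep (hG : Good H) (hs : BStep H H₁) : Good H₁ :=
  ⟨hs.navhist hG.1, hs.wf hG.1 hG.2⟩

lemma Good.stepN (hG : Good H) {n : ℕ} (hs : StepN Step n H H₁) : Good H₁ := by
  induction n generalizing H with
  | zero => exact hs ▸ hG
  | succ n ih => obtain ⟨X, hX, hs'⟩ := hs; exact ih (hG.step hX) hs'

lemma Good.bstepN (hG : Good H) {n : ℕ} (hs : StepN BStep n H H₁) : Good H₁ := by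
  induction n generalizing H with
  | zero => exact hs ▸ hG
  | succ n ih => obtain ⟨X, hX, hs'⟩ := hs; exact ih (hG.bstep hX) hs'

end NavData


namespace NavData

variable {α : Type}

lemma cancel {H : NavData α} (hG : Good H) :
    ∀ (n m : ℕ) (H' H'' : NavData α), StepN Step m H H' → StepN BStep n H' H'' →
      (n ≤ m → StepN Step (m - n) H H'') ∧ (m ≤ n → StepN BStep (n - m) H H'') := by
  intro n
  induction n with
  | zero =>
    intro m H' H'' hS hB
    have hB' : H' = H'' := hB
    subst hB'
    refine ⟨fun _ => by simpa using hS, fun hm => ?_⟩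
    have hm0 : m = 0 := Nat.le_zero.1 hm
    subst hm0
    exact (hS : H = H')
  | succ n ih =>
    intro m H' H'' hS hB
    obtain ⟨Y, hbY, hBn⟩ := hB
    cases m with
    | zero =>
      have hHH' : H = H' := hS
      subst hHH'
      exact ⟨fun h => absurd h (Nat.not_succ_le_zero n),
        fun _ => ⟨Y, hbY, hBn⟩⟩
    | succ k =>
      obtain ⟨Z, hZ, hstep⟩ := stepN_succ_iff.1 hS
      have hGZ : Good Z := hG.stepN hZ
      have hGH' : Good H' := hGZ.step hstep
      have hYZ : Y = Z := BStep.unique hGH'.1 hbY (Step.bstep hGZ.1 hGZ.2 hstep)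
      subst hYZ
      obtain ⟨c1, c2⟩ := ih k Y H'' hZ hBn
      refine ⟨fun hnm => ?_, fun hmn => ?_⟩
      · have heq : k + 1 - (n + 1) = k - n := by omega
        rw [heq]; exact c1 (by omega)
      · have heq : n + 1 - (k + 1) = n - k := by omega
        rw [heq]; exact c2 (by omega)

lemma cancel2 {H : NavData α} (hG : Good H) :
    ∀ (n m : ℕ) (H' H'' : NavData α), StepN BStep m H H' → StepN Step n H' H'' →
      (n ≤ m → StepN BStep (m - n) H H'') ∧ (m ≤ n → StepN Step (n - m) H H'') := by
  intro n
  induction n with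
  | zero =>
    intro m H' H'' hS hB
    have hB' : H' = H'' := hB
    subst hB'
    refine ⟨fun _ => by simpa using hS, fun hm => ?_⟩
    have hm0 : m = 0 := Nat.le_zero.1 hm
    subst hm0
    exact (hS : H = H')
  | succ n ih =>
    intro m H' H'' hS hB
    obtain ⟨Y, hbY, hBn⟩ := hB
    cases m with
    | zero =>
      have hHH' : H = H' := hS
      subst hHH'
      exact ⟨fun h => absurd h (Nat.not_succ_le_zero n),
        fun _ => ⟨Y, hbY, hBn⟩⟩
    | succ k =>
      obtain ⟨Z, hZ, hstep⟩ := stepN_succ_iff.1 hS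
      have hGZ : Good Z := hG.bstepN hZ
      have hGH' : Good H' := hGZ.bstep hstep
      have hYZ : Y = Z := Step.unique hGH'.1 hbY (BStep.step hGZ.1 hGZ.2 hstep)
      subst hYZ
      obtain ⟨c1, c2⟩ := ih k Y H'' hZ hBn
      refine ⟨fun hnm => ?_, fun hmn => ?_⟩
      · have heq : k + 1 - (n + 1) = k - n := by omega
        rw [heq]; exact c1 (by omega)
      · have heq : n + 1 - (k + 1) = n - k := by omega
        rw [heq]; exact c2 (by omega)

end NavData

theorem stmt12 {α : Type} (H H' H'' : NavData α) (hH : H.IsNavHist)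
    (hwf : H.WellFormed) (δ δ' : ℤ)
    (h1 : H.TraverseBy δ H') (h2 : H'.TraverseBy δ' H'') :
    H.TraverseBy (δ + δ') H'' := by
  have hG : NavData.Good H := ⟨hH, hwf⟩
  unfold NavData.TraverseBy at h1 h2 ⊢
  by_cases hδ : 0 ≤ δ <;> by_cases hδ' : 0 ≤ δ'
  · rw [if_pos hδ] at h1; rw [if_pos hδ'] at h2
    rw [if_pos (by omega : (0:ℤ) ≤ δ + δ')]
    have s1 := NavData.stepN_of_plus hH h1
    have s2 := NavData.stepN_of_plus (hG.stepN s1).1 h2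
    have heq : (δ + δ').toNat = δ.toNat + δ'.toNat := by omega
    rw [heq]
    exact NavData.plus_of_stepN hH (NavData.stepN_add s1 s2)
  · rw [if_pos hδ] at h1; rw [if_neg hδ'] at h2
    have s1 := NavData.stepN_of_plus hH h1
    have s2 := NavData.bstepN_of_minus h2
    obtain ⟨c1, c2⟩ := NavData.cancel hG ((-δ').toNat) δ.toNat H' H'' s1 s2
    by_cases hs : 0 ≤ δ + δ'
    · rw [if_pos hs]
      have heq : (δ + δ').toNat = δ.toNat - (-δ').toNat := by omega
      rw [heq]
      exact NavData.plus_of_stepN hH (c1 (by omega))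
    · rw [if_neg hs]
      have heq : (-(δ + δ')).toNat = (-δ').toNat - δ.toNat := by omega
      rw [heq]
      exact NavData.minus_of_bstepN (c2 (by omega))
  · rw [if_neg hδ] at h1; rw [if_pos hδ'] at h2
    have s1 := NavData.bstepN_of_minus h1
    have s2 := NavData.stepN_of_plus (hG.bstepN s1).1 h2
    obtain ⟨c1, c2⟩ := NavData.cancel2 hG δ'.toNat ((-δ).toNat) H' H'' s1 s2
    by_cases hs : 0 ≤ δ + δ'
    · rw [if_pos hs]
      have heq : (δ + δ').toNat = δ'.toNat - (-δ).toNat := by omega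
      rw [heq]
      exact NavData.plus_of_stepN hH (c2 (by omega))
    · rw [if_neg hs]
      have heq : (-(δ + δ')).toNat = (-δ).toNat - δ'.toNat := by omega
      rw [heq]
      exact NavData.minus_of_bstepN (c1 (by omega))
  · rw [if_neg hδ] at h1; rw [if_neg hδ'] at h2
    rw [if_neg (by omega : ¬ (0:ℤ) ≤ δ + δ')]
    have heq : (-(δ + δ')).toNat = (-δ).toNat + (-δ').toNat := by omega
    rw [heq]
    exact NavData.minus_of_bstepN
      (NavData.stepN_add (NavData.bstepN_of_minus h1) (NavData.bstepN_of_minus h2))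
end

section
/- For any well-formed navigation history H and δ ≥ 1: if H traverses the history by +δ to H', then H' traverses the history by −δ to H. -/
namespace NavData

variable {α : Type}

lemma ext' {H K : NavData α} (hD : H.D = K.D) (hA : H.A = K.A)
    (hc : H.child = K.child) (hl : H.le = K.le) (hs : H.sim = K.sim) : H = K := by
  cases H; cases K; cases hD; cases hA; cases hc; cases hl; cases hs; rfl

lemma tbm_snoc {H₀ H₁ H₂ : NavData α} {n : ℕ} {b : α}
    (h : TraverseByMinus H₀ n H₁) (hb : H₁.IsBackTarget b)
    (ht : H₁.TraverseFrom b H₂) : TraverseByMinus H₀ (n + 1) H₂ := by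
  induction h with
  | zero H => exact .succ hb ht (.zero _)
  | succ hb' ht' _ ih => exact .succ hb' ht' (ih hb ht)

lemma chain_all {R : α → α → Prop} (htr : ∀ a b c, R a b → R b c → R a c) :
    ∀ {l : List α} {x : α}, List.Chain R x l → ∀ y ∈ l, R x y := by
  intro l
  induction l with
  | nil => intro x _ y hy; simp at hy
  | cons z l ih =>
    intro x hc y hy
    change List.IsChain R (x :: z :: l) at hc
    rw [List.chain_cons] at hc
    obtain ⟨hxz, hc⟩ := hc
    rcases List.mem_cons.1 hy with rfl | hy
    · exact hxz
    · exact htr _ _ _ hxz (ih hc y hy)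

lemma fwd : ∀ (ds : List α) (G : NavData α), G.IsNavHist → G.WellFormed →
    G.FirstOfJSF ds → TraverseByMinus (ds.foldl traverseTo G) ds.length G := by
  intro ds
  induction ds with
  | nil => intro G _ _ _; exact .zero G
  | cons d ds ih =>
    intro G hG hwf hfirst
    obtain ⟨hfin, hAD, hchD, hacyc, hpar, hrefl, htrans, hanti, hleD, htot,
      hsrefl, hssym, hstrans, hsD, huniq, hchs, hchle⟩ := hG
    obtain ⟨hchain, hmem, hltall⟩ := hfirst
    have hdJ : d ∈ G.JSF := hmem d List.mem_cons_self
    obtain ⟨a, haA, hsad, hlad⟩ := hdJ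
    have hdD : d ∈ G.D := (hsD a d hsad).2
    have haD : a ∈ G.D := (hsD a d hsad).1
    -- uniqueness of the active representative of d's session
    have hau : ∀ y ∈ G.A, G.sim d y → y = a := by
      obtain ⟨r, ⟨hrA, hsdr⟩, hru⟩ := huniq d hdD
      have har : a = r := hru a ⟨haA, hssym a d hsad⟩
      intro y hyA hsdy
      rw [hru y ⟨hyA, hsdy⟩, ← har]
    have hlt_trans : ∀ x y z, G.lt x y → G.lt y z → G.lt x z := by
      intro x y z ⟨h1, h2⟩ ⟨h3, h4⟩
      refine ⟨htrans x y z h1 h3, fun he => ?_⟩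
      exact h2 (hanti x y h1 (he ▸ h3))
    have hchain_all : ∀ y ∈ ds, G.lt d y := chain_all hlt_trans hchain
    -- d is least in JSF
    have hleast : ∀ e ∈ G.JSF, e ≠ d → G.lt d e := by
      intro e he hne
      by_cases hmem' : e ∈ d :: ds
      · rcases List.mem_cons.1 hmem' with rfl | h
        · exact absurd rfl hne
        · exact hchain_all e h
      · exact hltall e he hmem' d List.mem_cons_self
    set G₁ := G.traverseTo d with hG₁
    have hA1 : G₁.A = { e | (e ∈ G.A ∧ ¬ G.sim d e) ∨ e = d } := rfl
    -- G₁ is a nav history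
    have hG1 : G₁.IsNavHist := by
      refine ⟨hfin, ?_, hchD, hacyc, hpar, hrefl, htrans, hanti, hleD, htot,
        hsrefl, hssym, hstrans, hsD, ?_, hchs, hchle⟩
      · intro x hx
        rcases hx with ⟨hxA, _⟩ | rfl
        · exact hAD hxA
        · exact hdD
      · intro x hx
        by_cases hsdx : G.sim d x
        · refine ⟨d, ⟨Or.inr rfl, hssym d x hsdx⟩, ?_⟩
          intro y ⟨hyA, hxy⟩
          rcases hyA with ⟨hyA, hndy⟩ | rfl
          · exact absurd (hstrans d x y hsdx hxy) hndy
          · rfl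
        · obtain ⟨r, ⟨hrA, hxr⟩, hru⟩ := huniq x hx
          have hndr : ¬ G.sim d r := fun h =>
            hsdx (hstrans d r x h (hssym x r hxr))
          refine ⟨r, ⟨Or.inl ⟨hrA, hndr⟩, hxr⟩, ?_⟩
          intro y ⟨hyA, hxy⟩
          rcases hyA with ⟨hyA, _⟩ | rfl
          · exact hru y ⟨hyA, hxy⟩
          · exact absurd (hssym x y hxy) hsdx
    -- G₁ is well-formed
    have hwf1 : G₁.WellFormed := by
      intro p q r s hpq hrs hp hs
      have hpq' : G.before p q := hpq
      have hrs' : G.before r s := hrs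
      rcases hp with ⟨hpA, hndp⟩ | hpd
      · rcases hs with ⟨hsA, _⟩ | hsd
        · exact hwf p q r s hpq' hrs' hpA hsA
        · -- s = d : need le d q, q ∈ JSF via p
          rw [hsd]
          by_cases hqd : q = d
          · rw [hqd]; exact hrefl d hdD
          · exact (hleast q ⟨p, hpA, hpq'⟩ hqd).1
      · rw [hpd] at hpq'
        rcases hs with ⟨hsA, _⟩ | hsd
        · -- p = d, s ∈ A
          have haq : G.before a q :=
            ⟨hstrans a d q hsad hpq'.1,
             htrans a d q hlad.1 hpq'.2.1,
             fun he => hlad.2 (hanti a d hlad.1 (by rw [he]; exact hpq'.2.1))⟩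
          exact hwf a q r s haq hrs' haA hsA
        · rw [hsd]; exact hpq'.2.1
    -- JSF of G₁
    have hJ1 : G₁.JSF = G.JSF \ {d} := by
      ext e
      constructor
      · rintro ⟨b, hb, hbe⟩
        have hbe' : G.before b e := hbe
        rcases hb with ⟨hbA, hndb⟩ | hbd
        · refine ⟨⟨b, hbA, hbe'⟩, fun he => ?_⟩
          simp only [Set.mem_singleton_iff] at he
          rw [he] at hbe'
          exact hndb (hssym b d hbe'.1)
        · rw [hbd] at hbe'
          refine ⟨⟨a, haA, hstrans a d e hsad hbe'.1,
            htrans a d e hlad.1 hbe'.2.1, fun he => ?_⟩, fun he => ?_⟩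
          · exact hlad.2 (hanti a d hlad.1 (by rw [he]; exact hbe'.2.1))
          · simp only [Set.mem_singleton_iff] at he
            exact hbe'.2.2 he.symm
      · rintro ⟨⟨b, hbA, hbe⟩, hne⟩
        simp only [Set.mem_singleton_iff] at hne
        by_cases hsdb : G.sim d b
        · exact ⟨d, Or.inr rfl, hstrans d b e hsdb hbe.1,
            (hleast e ⟨b, hbA, hbe⟩ hne).1, (hleast e ⟨b, hbA, hbe⟩ hne).2⟩
        · exact ⟨b, Or.inl ⟨hbA, hsdb⟩, hbe⟩
    -- FirstOfJSF for G₁ and ds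
    have hfirst1 : G₁.FirstOfJSF ds := by
      refine ⟨hchain.tail, ?_, ?_⟩
      · intro x hx
        rw [hJ1]
        exact ⟨hmem x (List.mem_cons_of_mem d hx), fun hxd =>
          (hchain_all x hx).2 (Set.mem_singleton_iff.1 hxd).symm⟩
      · intro e he hens x hx
        rw [hJ1] at he
        have hend : e ∉ d :: ds := by
          intro h
          rcases List.mem_cons.1 h with rfl | h
          · exact he.2 rfl
          · exact hens h
        exact hltall e he.1 hend x (List.mem_cons_of_mem d hx)
    -- d is the back target of G₁
    have hbt : G₁.IsBackTarget d := by
      refine ⟨Or.inr rfl, ⟨a, hsad, hlad⟩, ?_⟩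
      intro x hx ⟨c, hcx⟩
      have hcx' : G.before c x := hcx
      rcases hx with ⟨hxA, _⟩ | hxd
      · exact hwf a d c x ⟨hsad, hlad⟩ hcx' haA hxA
      · rw [hxd]; exact hrefl d hdD
    -- traversing from d in G₁ yields G
    have hbs : G₁.TraverseFrom d G := by
      refine ⟨a, ⟨⟨hsad, hlad⟩, ?_⟩, ?_⟩
      · intro x hx
        have hx' : G.before x d := hx
        have hxD : x ∈ G.D := (hsD x d hx'.1).1
        by_cases hxa : x = a
        · exact hxa ▸ hrefl a haD
        · rcases htot x hxD a haD with h | h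
          · exact h
          · exfalso
            have hax : G.before a x :=
              ⟨hstrans a d x hsad (hssym x d hx'.1), h, fun he => hxa he.symm⟩
            have := hleast x ⟨a, haA, hax⟩ hx'.2.2
            exact hx'.2.2 (hanti x d hx'.2.1 this.1)
      · refine (ext' (H := G₁.traverseTo a) (K := G) rfl ?_ rfl rfl rfl).symm
        ext e
        constructor
        · rintro (⟨hG1A, hnsae⟩ | hea)
          · rcases hG1A with ⟨heA, _⟩ | hed
            · exact heA
            · rw [hed] at hnsae; exact absurd hsad hnsae
          · rw [hea]; exact haA
        · intro heA
          by_cases hsae : G.sim a e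
          · have : e = a := hau e heA (hstrans d a e (hssym a d hsad) hsae)
            exact Or.inr this
          · exact Or.inl ⟨Or.inl ⟨heA, fun h => hsae (hstrans a d e hsad h)⟩, hsae⟩
    have hmin := ih G₁ hG1 hwf1 hfirst1
    have hfold : (d :: ds).foldl traverseTo G = ds.foldl traverseTo G₁ := rfl
    rw [hfold, List.length_cons]
    exact tbm_snoc hmin hbt hbs

end NavData

theorem stmt13 {α : Type} (H H' : NavData α) (hH : H.IsNavHist)
    (hwf : H.WellFormed) (δ : ℕ) (hδ : 1 ≤ δ)
    (h : H.TraverseByPlus δ H') : NavData.TraverseByMinus H' δ H := by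
  obtain ⟨ds, hlen, hfirst, rfl⟩ := h
  rw [← hlen]
  exact NavData.fwd ds H hH hwf hfirst
end

section
/- There exists a navigation history H (satisfying all the navigation history axioms) and histories H', H'' such that, under the UNPATCHED definitions (where 'traversing by δ' only changes the active document in a single session, traversing directly to the δ-th entry of the joint session future), H traverses by +1 to H', and H' traverses by +1 to H'', but H does NOT traverse by +2 to H''. (For instance, the 5-document example of Counterexample 1 from the paper works.) -/
namespace NavData

/-- The 5-document counterexample: 0 → 1,2,3,4; sessions {0},{1,3},{2,4}; A = {0,1,2}. -/
def Hex : NavData ℕ where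
  D := {d | d ≤ 4}
  A := {d | d ≤ 2}
  child d e := d = 0 ∧ 1 ≤ e ∧ e ≤ 4
  le d e := d ≤ e ∧ e ≤ 4
  sim d e := d ≤ 4 ∧ e ≤ 4 ∧ d % 2 = e % 2 ∧ (d = 0 ↔ e = 0)

lemma hex_transGen {a b : ℕ} (h : Relation.TransGen Hex.child a b) : a = 0 ∧ b ≠ 0 := by
  induction h with
  | single h => simp only [Hex] at h; omega
  | tail h1 h2 ih => simp only [Hex] at h2; omega

lemma hex_isNavHist : Hex.IsNavHist := by
  refine ⟨?_, ?_, ?_, ?_, ?_, ?_, ?_, ?_, ?_, ?_, ?_, ?_, ?_, ?_, ?_, ?_, ?_⟩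
  · exact (Set.finite_Iic 4).subset (fun d hd => hd)
  · intro d hd; simp only [Hex, Set.mem_setOf_eq] at *; omega
  · intro d e h; simp only [Hex, Set.mem_setOf_eq] at *; omega
  · intro d h; have := hex_transGen h; omega
  · intro p q e hp hq; simp only [Hex] at *; omega
  · intro d hd; simp only [Hex, Set.mem_setOf_eq] at *; omega
  · intro d e f h1 h2; simp only [Hex] at *; omega
  · intro d e h1 h2; simp only [Hex] at *; omega
  · intro d e h; simp only [Hex, Set.mem_setOf_eq] at *; omega
  · intro d hd e he; simp only [Hex, Set.mem_setOf_eq] at *; omega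
  · intro d hd; exact ⟨hd, hd, rfl, Iff.rfl⟩
  · intro d e h; simp only [Hex] at *; omega
  · intro d e f h1 h2; simp only [Hex] at *; omega
  · intro d e h; simp only [Hex, Set.mem_setOf_eq] at *; omega
  · intro d hd
    refine ⟨d - 2 * (d / 3), ?_, ?_⟩
    · simp only [Hex, Set.mem_setOf_eq] at *; omega
    · intro y hy; simp only [Hex, Set.mem_setOf_eq] at *; omega
  · intro d e e' h1 h2; simp only [Hex] at *; omega
  · intro d e h; simp only [Hex] at *; omega

lemma hex_JSF (e : ℕ) : e ∈ Hex.JSF ↔ e = 3 ∨ e = 4 := by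
  simp only [JSF, before, NavData.lt, Hex, Set.mem_setOf_eq]
  constructor
  · rintro ⟨d, hd, hsim, hle, hne⟩; omega
  · rintro (rfl | rfl)
    · exact ⟨1, by omega⟩
    · exact ⟨2, by omega⟩

lemma hex'_JSF (e : ℕ) : e ∈ (Hex.traverseTo 3).JSF ↔ e = 4 := by
  simp only [JSF, before, NavData.lt, traverseTo, Hex, Set.mem_setOf_eq]
  constructor
  · rintro ⟨d, hd, hsim, hle, hne⟩; omega
  · rintro rfl
    · exact ⟨2, by omega⟩

lemma hex_mem_A {e : ℕ} : e ∈ Hex.A ↔ e ≤ 2 := Iff.rfl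

lemma hex_sim {d e : ℕ} :
    Hex.sim d e ↔ (d ≤ 4 ∧ e ≤ 4 ∧ d % 2 = e % 2 ∧ (d = 0 ↔ e = 0)) := Iff.rfl

lemma mem_A_traverseTo {H : NavData ℕ} {d e : ℕ} :
    e ∈ (H.traverseTo d).A ↔ ((e ∈ H.A ∧ ¬ H.sim d e) ∨ e = d) := Iff.rfl

lemma sim_traverseTo (H : NavData ℕ) (d : ℕ) : (H.traverseTo d).sim = H.sim := rfl

end NavData

theorem stmt14 : ∃ H H' H'' : NavData ℕ, H.IsNavHist ∧
    H.UnpatchedTraverseByPlus 1 H' ∧ H'.UnpatchedTraverseByPlus 1 H'' ∧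
    ¬ H.UnpatchedTraverseByPlus 2 H'' := by
  refine ⟨NavData.Hex, NavData.Hex.traverseTo 3, (NavData.Hex.traverseTo 3).traverseTo 4,
    NavData.hex_isNavHist, ?_, ?_, ?_⟩
  · refine ⟨[3], ⟨?_, ?_, ?_⟩, rfl, 3, rfl, rfl⟩
    · exact List.IsChain.singleton _
    · intro d hd; simp at hd; subst hd; rw [NavData.hex_JSF]; left; rfl
    · intro e he hne d hd
      rw [NavData.hex_JSF] at he
      simp at hd hne; subst hd
      have he4 : e = 4 := by omega
      subst he4
      exact ⟨⟨by omega, by omega⟩, by omega⟩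
  · refine ⟨[4], ⟨?_, ?_, ?_⟩, rfl, 4, rfl, rfl⟩
    · exact List.IsChain.singleton _
    · intro d hd; simp at hd; subst hd; rw [NavData.hex'_JSF]
    · intro e he hne d hd
      rw [NavData.hex'_JSF] at he
      simp at hne; omega
  · rintro ⟨ds, ⟨hchain, hmem, hlast'⟩, hlen, d, hlast, heq⟩
    match ds, hlen with
    | [a, b], _ =>
      simp only [List.getLast?] at hlast
      have hb : b ∈ NavData.Hex.JSF := hmem b (by simp)
      rw [NavData.hex_JSF] at hb
      have hdb : b = d := by simpa using hlast
      subst hdb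
      have hA := congrArg NavData.A heq
      rcases hb with rfl | rfl
      · have h2 : (2 : ℕ) ∈ (NavData.Hex.traverseTo 3).A := by
          simp only [NavData.mem_A_traverseTo, NavData.sim_traverseTo, NavData.hex_mem_A,
            NavData.hex_sim]; omega
        rw [← hA] at h2
        simp only [NavData.mem_A_traverseTo, NavData.sim_traverseTo, NavData.hex_mem_A,
          NavData.hex_sim] at h2
        revert h2; decide
      · have h1 : (1 : ℕ) ∈ (NavData.Hex.traverseTo 4).A := by
          simp only [NavData.mem_A_traverseTo, NavData.sim_traverseTo, NavData.hex_mem_A,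
            NavData.hex_sim]; omega
        rw [← hA] at h1
        simp only [NavData.mem_A_traverseTo, NavData.sim_traverseTo, NavData.hex_mem_A,
          NavData.hex_sim] at h1
        revert h1; decide
end

section
/- Let H be a well-formed navigation history, let d be a fully active document of H, let d' be fresh (d' ∉ D), and let H' be the result of navigating from d to d' using the PATCHED definition: first delete the entire joint session future of H (remove each such document together with all its →-descendants), then replace d by d'. Then H' is a well-formed navigation history. -/
namespace NavData

variable {α : Type}

/-- The set removed by `deleteJSF`. -/
def delSet (H : NavData α) : Set α :=
  { e | ∃ j ∈ H.JSF, Relation.ReflTransGen H.child j e }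

theorem active_not_JSF {H : NavData α} (hH : H.IsNavHist) {a : α} (ha : a ∈ H.A) :
    a ∉ H.JSF := by
  obtain ⟨hfin, hAD, hcD, hacyc, hpar, hrefl, htrans, hanti, hleD, htot, hsrefl, hsymm,
    hstrans, hsD, hrep, hchsim, hchle⟩ := hH
  rintro ⟨b, hb, hsim, hle, hne⟩
  obtain ⟨u, _, hu⟩ := hrep b (hAD hb)
  have h1 : a = u := hu a ⟨ha, hsim⟩
  have h2 : b = u := hu b ⟨hb, hsrefl b (hAD hb)⟩
  exact hne (h2.trans h1.symm)

theorem delSet_closure {H : NavData α} (hH : H.IsNavHist) {a x : α}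
    (ha : a ∈ H.A) (hsim : H.sim a x) (haR : a ∈ H.delSet) : x ∈ H.delSet := by
  obtain ⟨j, hj, hja⟩ := haR
  rcases (Relation.reflTransGen_iff_eq_or_transGen.mp hja) with rfl | htg
  · exact absurd hj (active_not_JSF hH ha)
  · obtain ⟨p, hjp, hpa⟩ := Relation.TransGen.tail'_iff.mp htg
    have hpx : H.child p x := hH.2.2.2.2.2.2.2.2.2.2.2.2.2.2.2.1 p a x hpa hsim
    exact ⟨j, hj, hjp.tail hpx⟩

theorem deleteJSF_isNavHist {H : NavData α} (hH : H.IsNavHist) :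
    (H.deleteJSF).IsNavHist := by
  have hH' := hH
  obtain ⟨hfin, hAD, hcD, hacyc, hpar, hrefl, htrans, hanti, hleD, htot, hsrefl, hsymm,
    hstrans, hsD, hrep, hchsim, hchle⟩ := hH'
  refine ⟨hfin.subset Set.diff_subset, fun x hx => ⟨hAD hx.1, hx.2⟩,
    ?_, ?_, ?_, ?_, ?_, ?_, ?_, ?_, ?_, ?_, ?_, ?_, ?_, ?_, ?_⟩
  · rintro e f ⟨h, he, hf⟩
    exact ⟨⟨(hcD e f h).1, he⟩, ⟨(hcD e f h).2, hf⟩⟩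
  · intro e h
    exact hacyc e (Relation.TransGen.mono (r := (H.deleteJSF).child) (p := H.child) (fun x y hxy => hxy.1) e e h)
  · rintro p q e ⟨h1, _, _⟩ ⟨h2, _, _⟩
    exact hpar p q e h1 h2
  · rintro e ⟨he, heR⟩
    exact ⟨hrefl e he, heR, heR⟩
  · rintro e f g ⟨h1, he, hf⟩ ⟨h2, _, hg⟩
    exact ⟨htrans e f g h1 h2, he, hg⟩
  · rintro e f ⟨h1, _, _⟩ ⟨h2, _, _⟩
    exact hanti e f h1 h2
  · rintro e f ⟨h, he, hf⟩
    exact ⟨⟨(hleD e f h).1, he⟩, ⟨(hleD e f h).2, hf⟩⟩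
  · rintro e ⟨he, heR⟩ f ⟨hf, hfR⟩
    rcases htot e he f hf with h | h
    · exact Or.inl ⟨h, heR, hfR⟩
    · exact Or.inr ⟨h, hfR, heR⟩
  · rintro e ⟨he, heR⟩
    exact ⟨hsrefl e he, heR, heR⟩
  · rintro e f ⟨h, he, hf⟩
    exact ⟨hsymm e f h, hf, he⟩
  · rintro e f g ⟨h1, he, hf⟩ ⟨h2, _, hg⟩
    exact ⟨hstrans e f g h1 h2, he, hg⟩
  · rintro e f ⟨h, he, hf⟩
    exact ⟨⟨(hsD e f h).1, he⟩, ⟨(hsD e f h).2, hf⟩⟩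
  · rintro e ⟨he, heR⟩
    obtain ⟨a, ⟨haA, hae⟩, hu⟩ := hrep e he
    have haR : a ∉ H.delSet := fun h => heR (delSet_closure hH haA (hsymm e a hae) h)
    refine ⟨a, ⟨⟨haA, haR⟩, hae, heR, haR⟩, ?_⟩
    rintro b ⟨⟨hbA, _⟩, hb, _, _⟩
    exact hu b ⟨hbA, hb⟩
  · rintro p e e' ⟨h1, hp, he⟩ ⟨h2, _, he'⟩
    exact ⟨hchsim p e e' h1 h2, hp, he'⟩
  · rintro p e ⟨h, hp, he⟩
    exact ⟨hchle p e h, hp, he⟩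

theorem JSF_deleteJSF (H : NavData α) : (H.deleteJSF).JSF = ∅ := by
  ext e
  simp only [Set.mem_empty_iff_false, iff_false]
  rintro ⟨a, ⟨haA, haR⟩, ⟨hsim, _, heR⟩, ⟨hle, _, _⟩, hne⟩
  exact heR ⟨e, ⟨a, haA, hsim, hle, hne⟩, Relation.ReflTransGen.refl⟩

theorem fullyActive_ancestors {H : NavData α} (hH : H.IsNavHist) {d : α}
    (hd : H.FullyActive d) : ∀ j, Relation.ReflTransGen H.child j d → j ∈ H.A := by
  obtain ⟨d₀, ⟨hd₀A, hd₀root⟩, hpath⟩ := hd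
  induction hpath with
  | refl =>
    intro j hj
    rcases (Relation.reflTransGen_iff_eq_or_transGen.mp hj) with rfl | htg
    · exact hd₀A
    · obtain ⟨p, _, hp⟩ := Relation.TransGen.tail'_iff.mp htg
      exact absurd hp (hd₀root p)
  | tail hbc hcb ih =>
    rename_i b c
    intro j hj
    rcases (Relation.reflTransGen_iff_eq_or_transGen.mp hj) with rfl | htg
    · exact hcb.2
    · obtain ⟨p, hjp, hp⟩ := Relation.TransGen.tail'_iff.mp htg
      have hpb : p = b := hH.2.2.2.2.1 p b c hp hcb.1
      exact ih j (hpb ▸ hjp)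

theorem fullyActive_not_delSet {H : NavData α} (hH : H.IsNavHist) {d : α}
    (hd : H.FullyActive d) : d ∉ H.delSet := by
  rintro ⟨j, hj, hjd⟩
  exact active_not_JSF hH (fullyActive_ancestors hH hd j hjd) hj

theorem replaceDoc_isNavHist {H : NavData α} (hH : H.IsNavHist) {d d' : α}
    (hdA : d ∈ H.A) (hd' : d' ∉ H.D) : (H.replaceDoc d d').IsNavHist := by
  obtain ⟨hfin, hAD, hcD, hacyc, hpar, hrefl, htrans, hanti, hleD, htot, hsrefl, hsymm,
    hstrans, hsD, hrep, hchsim, hchle⟩ := hH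
  have hdD : d ∈ H.D := hAD hdA
  have hcd'₁ : ∀ e, ¬ H.child d' e := fun e h => hd' (hcD d' e h).1
  have hcd'₂ : ∀ e, ¬ H.child e d' := fun e h => hd' (hcD e d' h).2
  have hld'₁ : ∀ e, ¬ H.le d' e := fun e h => hd' (hleD d' e h).1
  have hld'₂ : ∀ e, ¬ H.le e d' := fun e h => hd' (hleD e d' h).2
  have hsd'₁ : ∀ e, ¬ H.sim d' e := fun e h => hd' (hsD d' e h).1
  have hsd'₂ : ∀ e, ¬ H.sim e d' := fun e h => hd' (hsD e d' h).2
  have hdne : d ≠ d' := fun h => hd' (h ▸ hdD)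
  have hnc : ∀ f, ¬ (H.replaceDoc d d').child d' f := by
    rintro f (h | ⟨h, _⟩)
    · exact hcd'₁ f h
    · exact hcd'₁ d h
  have htg : ∀ e f, f ≠ d' → Relation.TransGen (H.replaceDoc d d').child e f →
      Relation.TransGen H.child e f := by
    intro e f hf h
    induction h using Relation.TransGen.head_induction_on with
    | single h =>
      rcases h with h | ⟨_, rfl⟩
      · exact Relation.TransGen.single h
      · exact absurd rfl hf
    | head h₁ h₂ ih =>
      rename_i a c
      have hc : c ≠ d' := by
        rintro rfl
        obtain ⟨x, hx, _⟩ := Relation.TransGen.head'_iff.mp h₂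
        exact hnc x hx
      rcases h₁ with h₁ | ⟨_, h₁⟩
      · exact Relation.TransGen.head h₁ ih
      · exact absurd h₁ hc
  refine ⟨hfin.union (Set.finite_singleton d'), ?_,
    ?_, ?_, ?_, ?_, ?_, ?_, ?_, ?_, ?_, ?_, ?_, ?_, ?_, ?_, ?_⟩
  · rintro x (⟨hx, _⟩ | rfl)
    · exact Or.inl (hAD hx)
    · exact Or.inr rfl
  · rintro e f (h | ⟨h, rfl⟩)
    · exact ⟨Or.inl (hcD e f h).1, Or.inl (hcD e f h).2⟩
    · exact ⟨Or.inl (hcD e d h).1, Or.inr rfl⟩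
  · intro e h
    by_cases he : e = d'
    · subst he
      obtain ⟨x, hx, _⟩ := Relation.TransGen.head'_iff.mp h
      exact hnc x hx
    · exact hacyc e (htg e e he h)
  · rintro p q e (h1 | ⟨h1, rfl⟩) (h2 | ⟨h2, h2'⟩)
    · exact hpar p q e h1 h2
    · exact absurd (h2' ▸ h1) (hcd'₂ p)
    · exact absurd h2 (hcd'₂ q)
    · exact hpar p q d h1 h2
  · rintro e (he | rfl)
    · exact Or.inl (hrefl e he)
    · exact Or.inr ⟨Or.inr rfl, rfl⟩
  · rintro a b c (h1 | ⟨ha, rfl⟩) (h2 | ⟨hb, rfl⟩)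
    · exact Or.inl (htrans a b c h1 h2)
    · exact Or.inr ⟨Or.inl (hleD a b h1).1, rfl⟩
    · exact absurd h2 (hld'₁ c)
    · exact Or.inr ⟨ha, rfl⟩
  · intro a b h1 h2
    rcases h1 with h1 | ⟨ha, hb⟩
    · rcases h2 with h2 | ⟨_, ha⟩
      · exact hanti a b h1 h2
      · subst ha
        exact absurd h1 (hld'₁ b)
    · subst hb
      rcases h2 with h2 | ⟨_, ha⟩
      · exact absurd h2 (hld'₁ a)
      · exact ha
  · rintro e f (h | ⟨he, rfl⟩)
    · exact ⟨Or.inl (hleD e f h).1, Or.inl (hleD e f h).2⟩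
    · rcases he with he | rfl
      · exact ⟨Or.inl he, Or.inr rfl⟩
      · exact ⟨Or.inr rfl, Or.inr rfl⟩
  · rintro e (he | rfl) f hf
    · rcases hf with hf | rfl
      · rcases htot e he f hf with h | h
        · exact Or.inl (Or.inl h)
        · exact Or.inr (Or.inl h)
      · exact Or.inl (Or.inr ⟨Or.inl he, rfl⟩)
    · rcases hf with hf | rfl
      · exact Or.inr (Or.inr ⟨Or.inl hf, rfl⟩)
      · exact Or.inl (Or.inr ⟨Or.inr rfl, rfl⟩)
  · rintro e (he | rfl)
    · exact Or.inl (hsrefl e he)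
    · exact Or.inr (Or.inl ⟨rfl, rfl⟩)
  · rintro e f (h | ⟨rfl, rfl⟩ | ⟨h, rfl⟩ | ⟨h, rfl⟩)
    · exact Or.inl (hsymm e f h)
    · exact Or.inr (Or.inl ⟨rfl, rfl⟩)
    · exact Or.inr (Or.inr (Or.inr ⟨hsymm e d h, rfl⟩))
    · exact Or.inr (Or.inr (Or.inl ⟨hsymm d f h, rfl⟩))
  · intro a b c h1 h2
    rcases h1 with s1 | ⟨ha, hb⟩ | ⟨s1, hb⟩ | ⟨s1, ha⟩
    · rcases h2 with s2 | ⟨hb, hc⟩ | ⟨s2, hc⟩ | ⟨s2, hb⟩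
      · exact Or.inl (hstrans a b c s1 s2)
      · subst hb; exact absurd s1 (hsd'₂ a)
      · subst hc; exact Or.inr (Or.inr (Or.inl ⟨hstrans a b d s1 s2, rfl⟩))
      · subst hb; exact absurd s1 (hsd'₂ a)
    · subst ha; subst hb
      rcases h2 with s2 | ⟨hb, hc⟩ | ⟨s2, hc⟩ | ⟨s2, hb⟩
      · exact absurd s2 (hsd'₁ c)
      · subst hc; exact Or.inr (Or.inl ⟨rfl, rfl⟩)
      · exact absurd s2 (hsd'₁ d)
      · exact Or.inr (Or.inr (Or.inr ⟨s2, rfl⟩))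
    · subst hb
      rcases h2 with s2 | ⟨hb, hc⟩ | ⟨s2, hc⟩ | ⟨s2, hb⟩
      · exact absurd s2 (hsd'₁ c)
      · subst hc; exact Or.inr (Or.inr (Or.inl ⟨s1, rfl⟩))
      · exact absurd s2 (hsd'₁ d)
      · exact Or.inl (hstrans a d c s1 s2)
    · subst ha
      rcases h2 with s2 | ⟨hb, hc⟩ | ⟨s2, hc⟩ | ⟨s2, hb⟩
      · exact Or.inr (Or.inr (Or.inr ⟨hstrans d b c s1 s2, rfl⟩))
      · subst hb; exact absurd s1 (hsd'₂ d)
      · subst hc; exact Or.inr (Or.inl ⟨rfl, rfl⟩)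
      · subst hb; exact absurd s1 (hsd'₂ d)
  · rintro e f (h | ⟨rfl, rfl⟩ | ⟨h, rfl⟩ | ⟨h, rfl⟩)
    · exact ⟨Or.inl (hsD e f h).1, Or.inl (hsD e f h).2⟩
    · exact ⟨Or.inr rfl, Or.inr rfl⟩
    · exact ⟨Or.inl (hsD e d h).1, Or.inr rfl⟩
    · exact ⟨Or.inr rfl, Or.inl (hsD d f h).2⟩
  · rintro e he
    by_cases hed : H.sim e d ∨ e = d'
    · refine ⟨d', ⟨Or.inr rfl, ?_⟩, ?_⟩
      · rcases hed with hed | rfl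
        · exact Or.inr (Or.inr (Or.inl ⟨hed, rfl⟩))
        · exact Or.inr (Or.inl ⟨rfl, rfl⟩)
      · rintro b ⟨hbA2, hsb⟩
        rcases hbA2 with ⟨hbA, hbd⟩ | hb
        · have hbnd : b ≠ d := fun h => hbd (Set.mem_singleton_iff.mpr h)
          rcases hsb with hsb | ⟨_, hb⟩ | ⟨_, hb⟩ | ⟨hsb, he2⟩
          · exfalso
            rcases hed with hed | he2
            · obtain ⟨u, _, hu⟩ := hrep e (hsD e d hed).1
              exact hbnd ((hu b ⟨hbA, hsb⟩).trans (hu d ⟨hdA, hed⟩).symm)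
            · subst he2
              exact hsd'₁ b hsb
          · exact hb
          · exact hb
          · exfalso
            obtain ⟨u, _, hu⟩ := hrep d hdD
            exact hbnd ((hu b ⟨hbA, hsb⟩).trans (hu d ⟨hdA, hsrefl d hdD⟩).symm)
        · exact Set.mem_singleton_iff.mp hb
    · push_neg at hed
      obtain ⟨hnsim, hne⟩ := hed
      have heD : e ∈ H.D := by
        rcases he with he | rfl
        · exact he
        · exact absurd rfl hne
      obtain ⟨a, ⟨haA, hea⟩, hu⟩ := hrep e heD
      have had : a ≠ d := fun h => hnsim (h ▸ hea)
      refine ⟨a, ⟨Or.inl ⟨haA, had⟩, Or.inl hea⟩, ?_⟩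
      rintro b ⟨hbA2, hsb⟩
      rcases hbA2 with ⟨hbA, hbd⟩ | hb
      · rcases hsb with hsb | ⟨he2, _⟩ | ⟨hsb, _⟩ | ⟨_, he2⟩
        · exact hu b ⟨hbA, hsb⟩
        · exact absurd he2 hne
        · exact absurd hsb hnsim
        · exact absurd he2 hne
      · exfalso
        have hb' : b = d' := Set.mem_singleton_iff.mp hb
        subst hb'
        rcases hsb with hsb | ⟨he2, _⟩ | ⟨hsb, _⟩ | ⟨_, he2⟩
        · exact hsd'₂ e hsb
        · exact hne he2
        · exact hnsim hsb
        · exact hne he2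
  · intro p e e' h1 h2
    rcases h1 with h1 | ⟨h1, he⟩
    · rcases h2 with h2 | ⟨he, he'⟩ | ⟨h2, he'⟩ | ⟨h2, he⟩
      · exact Or.inl (hchsim p e e' h1 h2)
      · subst he
        exact absurd h1 (hcd'₂ p)
      · subst he'
        exact Or.inr ⟨hchsim p e d h1 h2, rfl⟩
      · subst he
        exact absurd h1 (hcd'₂ p)
    · subst he
      rcases h2 with h2 | ⟨he, he'⟩ | ⟨h2, he'⟩ | ⟨h2, he⟩
      · exact absurd h2 (hsd'₁ e')
      · subst he'
        exact Or.inr ⟨h1, rfl⟩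
      · exact absurd h2 (hsd'₁ d)
      · exact Or.inl (hchsim p d e' h1 h2)
  · rintro p e (h | ⟨h, rfl⟩)
    · exact Or.inl (hchle p e h)
    · exact Or.inr ⟨Or.inl (hcD p d h).1, rfl⟩

theorem replaceDoc_wf {H : NavData α} (hH : H.IsNavHist) (hJ : H.JSF = ∅)
    {d d' : α} (hd' : d' ∉ H.D) : (H.replaceDoc d d').WellFormed := by
  intro a b c e h1 h2 ha he
  by_cases hb : b = d'
  · subst hb
    refine Or.inr ⟨?_, rfl⟩
    rcases he with ⟨heA, _⟩ | heq
    · exact Or.inl (hH.2.1 heA)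
    · exact Or.inr (Set.mem_singleton_iff.mp heq)
  · exfalso
    obtain ⟨hs, hl, hne⟩ := h1
    have hlab : H.le a b := by
      rcases hl with hl | ⟨_, hbeq⟩
      · exact hl
      · exact absurd hbeq hb
    have haD : a ∈ H.D := (hH.2.2.2.2.2.2.2.2.1 a b hlab).1
    have hand' : a ≠ d' := fun h => hd' (h ▸ haD)
    have hsab : H.sim a b := by
      rcases hs with hs | ⟨haeq, hbeq⟩ | ⟨_, hbeq⟩ | ⟨_, haeq⟩
      · exact hs
      · exact absurd hbeq hb
      · exact absurd hbeq hb
      · exact absurd haeq hand'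
    have haA : a ∈ H.A := by
      rcases ha with ⟨haA, _⟩ | haeq
      · exact haA
      · exact absurd (Set.mem_singleton_iff.mp haeq) hand'
    have : b ∈ H.JSF := ⟨a, haA, hsab, hlab, hne⟩
    rw [hJ] at this
    exact this

end NavData

theorem stmt15 {α : Type} (H : NavData α) (hH : H.IsNavHist)
    (hwf : H.WellFormed) {d d' : α} (hd : H.FullyActive d) (hd' : d' ∉ H.D) :
    (H.navigateFrom d d').IsNavHist ∧ (H.navigateFrom d d').WellFormed := by
  have h1 : (H.deleteJSF).IsNavHist := NavData.deleteJSF_isNavHist hH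
  have hdA : d ∈ H.A :=
    NavData.fullyActive_ancestors hH hd d Relation.ReflTransGen.refl
  have hdA1 : d ∈ (H.deleteJSF).A := ⟨hdA, NavData.fullyActive_not_delSet hH hd⟩
  have hd'1 : d' ∉ (H.deleteJSF).D := fun h => hd' h.1
  exact ⟨NavData.replaceDoc_isNavHist h1 hdA1 hd'1,
    NavData.replaceDoc_wf h1 (NavData.JSF_deleteJSF H) hd'1⟩
end

section
/- Let H be a navigation history, let d be fully active in H, let d' ∉ D be fresh, and let H' be the result of navigating from d to d' (delete the joint session future, then replace d by d'). Then d' is fully active in H'. -/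
theorem stmt16 {α : Type} (H : NavData α) (hH : H.IsNavHist)
    {d d' : α} (hd : H.FullyActive d) (hd' : d' ∉ H.D) :
    (H.navigateFrom d d').FullyActive d' := by
  obtain ⟨d₀, ⟨hd₀A, hd₀root⟩, hpath⟩ := hd
  obtain ⟨hfin, hAD, hchildD, hacyc, hparent, hrefl, htrans, hantisym, hleD, htot,
    hsimrefl, hsimsymm, hsimtrans, hsimD, huniq, hsess, hchildle⟩ := hH
  set R : Set α := {e | ∃ j ∈ H.JSF, Relation.ReflTransGen H.child j e} with hR
  -- JSF contains no active documents
  have hJSFA : ∀ e ∈ H.JSF, e ∉ H.A := by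
    rintro e ⟨a, haA, hsim, hle, hne⟩ heA
    obtain ⟨u, hu, huniq'⟩ := huniq e ((hsimD _ _ hsim).2)
    have h1 : a = u := huniq' a ⟨haA, hsimsymm _ _ hsim⟩
    have h2 : e = u := huniq' e ⟨heA, hsimrefl e ((hsimD _ _ hsim).2)⟩
    exact hne (h1.trans h2.symm)
  -- documents reachable from the active root by active children avoid R
  have hnotR : ∀ p, Relation.ReflTransGen H.activeChild d₀ p → p ∉ R := by
    intro p hp
    induction hp with
    | refl =>
      rintro ⟨j, hj, hjd⟩
      rcases hjd.cases_tail with h | ⟨c, _, hc⟩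
      · exact hJSFA _ hj (h ▸ hd₀A)
      · exact hd₀root c hc
    | @tail b c hab hbc ih =>
      rintro ⟨j, hj, hjc⟩
      rcases hjc.cases_tail with h | ⟨e, hje, hec⟩
      · exact hJSFA _ hj (h ▸ hbc.2)
      · have : e = b := hparent e b c hec hbc.1
        exact ih ⟨j, hj, this ▸ hje⟩
  set H₁ := H.deleteJSF with hH₁
  have hd₀R : d₀ ∉ R := hnotR d₀ .refl
  -- lift the path into H₁
  have hpath1 : Relation.ReflTransGen H₁.activeChild d₀ d := by
    clear hd'
    induction hpath with
    | refl => exact .refl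
    | @tail b c hab hbc ih =>
      exact ih.tail ⟨⟨hbc.1, hnotR _ hab, hnotR _ (hab.tail hbc)⟩,
        hbc.2, hnotR _ (hab.tail hbc)⟩
  have hchild1 : ∀ e f, H₁.child e f → H.child e f := fun e f h => h.1
  set H₂ := H.navigateFrom d d' with hH₂
  have hd₀root1 : ∀ e, ¬ H₁.child e d₀ := fun e h => hd₀root e (hchild1 _ _ h)
  have hd'nD1 : ∀ e, ¬ H₁.child e d' := fun e h =>
    hd' ((hchildD _ _ (hchild1 _ _ h)).2)
  have hd'A2 : d' ∈ H₂.A := Or.inr rfl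
  rcases hpath1.cases_tail with heq | ⟨p, hdp, hpd⟩
  · -- d = d₀ : the root itself is replaced
    refine ⟨d', ⟨hd'A2, ?_⟩, .refl⟩
    rintro e (he | ⟨he, -⟩)
    · exact hd'nD1 e he
    · exact hd₀root1 e (heq ▸ he)
  · -- nontrivial path
    have htg : ∀ q, Relation.ReflTransGen H₁.activeChild d₀ q →
        Relation.TransGen H.child q d →
        Relation.ReflTransGen H₂.activeChild d₀ q := by
      intro q hq
      induction hq with
      | refl => intro _; exact .refl
      | @tail b c hab hbc ih =>
        intro hqd
        have hb : Relation.TransGen H.child b d :=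
          Relation.TransGen.head (hchild1 _ _ hbc.1) hqd
        refine (ih hb).tail ⟨Or.inl hbc.1, Or.inl ⟨hbc.2, ?_⟩⟩
        intro h
        exact hacyc d (h ▸ hqd)
    have hpd' : Relation.TransGen H.child p d :=
      Relation.TransGen.single (hchild1 _ _ hpd.1)
    have hpath2 : Relation.ReflTransGen H₂.activeChild d₀ d' :=
      (htg p hdp hpd').tail ⟨Or.inr ⟨hpd.1, rfl⟩, hd'A2⟩
    have hd₀ne : d₀ ≠ d := by
      rintro rfl
      have : Relation.TransGen H.child d₀ d₀ :=
        Relation.TransGen.tail'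
          (Relation.ReflTransGen.mono (fun a b (h : H₁.activeChild a b) => h.1.1) _ _ hdp) (hchild1 _ _ hpd.1)
      exact hacyc d₀ this
    refine ⟨d₀, ⟨Or.inl ⟨⟨hd₀A, hd₀R⟩, hd₀ne⟩, ?_⟩, hpath2⟩
    rintro e (he | ⟨-, he⟩)
    · exact hd₀root1 e he
    · exact hd' (he ▸ hAD hd₀A)
end
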